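/- arXiv:2412.03694 — 5 statements merged into one kernel-verified Lean document; each statement's English description precedes it below -/
import Mathlib

section
/- Fix r ≥ 1 and let (v_1,…,v_r) be a system of linear functionals on ℂ[x] with ⟨v_j, 1⟩ = 1 for all 1 ≤ j ≤ r. Then the following are equivalent: (i) there exist a sequence of formal power series (g_k)_{k∈ℕ} in ℂ[[t]] each with constant coefficient 1 and a sequence (α_k)_{k∈ℕ} of nonzero complex numbers such that g_0 = 1, g_j = Σ_{n≥0} ⟨v_j, x^n⟩ t^n for 1 ≤ j ≤ r, and g_{k+1} − g_k = α_k t g_{k+r+1} for all k ∈ ℕ; (ii) for every 0 ≤ j ≤ r and every m ≥ 1, the determinant of the m×m leading principal submatrix of the moment matrix of the system V^{[j]} := (v_{j+1},…,v_r, x·v_1,…,x·v_j) is nonzero (equivalently, all type I and type II multiple orthogonal polynomials on the step-line with respect to each V^{[j]} exist and are unique). -/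
open Polynomial Finset

noncomputable section

/-- A linear functional on `ℂ[x]`. -/
abbrev LF := Polynomial ℂ →ₗ[ℂ] ℂ

/-- `x·u` is the functional `p ↦ ⟨u, x p⟩`. -/
def xMul (u : LF) : LF := u.comp (LinearMap.mulLeft ℂ (Polynomial.X : Polynomial ℂ))

/-- The moment matrix of a system of `r` linear functionals (0-indexed). -/
def momentMatrix (r : ℕ) (v : ℕ → LF) (n ℓ : ℕ) : ℂ :=
  v (ℓ % r) (Polynomial.X ^ (ℓ / r + n))

/-- The Darboux-transformed system `V^{[j]} = (v_{j+1},…,v_r, x·v_1,…,x·v_j)`. -/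
def Vsys (r j : ℕ) (v : ℕ → LF) : ℕ → LF :=
  fun i => if j + i < r then v (j + i) else xMul (v (j + i - r))

/-- `Δ_m`: determinant of the `m × m` leading principal submatrix of the
moment matrix of `v`. -/
def Delta (r : ℕ) (v : ℕ → LF) (m : ℕ) : ℂ :=
  Matrix.det (Matrix.of fun i j : Fin m => momentMatrix r v i j)

namespace BCF
open PowerSeries

/-- The basic series `F c a = ∑ c (a + r n) t^n`. -/
def Fs (r : ℕ) (c : ℕ → ℂ) (a : ℕ) : PowerSeries ℂ := PowerSeries.mk fun n => c (a + r * n)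

@[simp] lemma coeff_Fs (r : ℕ) (c : ℕ → ℂ) (a n : ℕ) :
    PowerSeries.coeff n (Fs r c a) = c (a + r * n) := coeff_mk _ _

/-- Shift a power series by `d` (drop `d` coefficients). -/
def sh (d : ℕ) (φ : PowerSeries ℂ) : PowerSeries ℂ := PowerSeries.mk fun n => PowerSeries.coeff (n + d) φ

@[simp] lemma coeff_sh (d : ℕ) (φ : PowerSeries ℂ) (n : ℕ) :
    PowerSeries.coeff n (sh d φ) = PowerSeries.coeff (n + d) φ := coeff_mk _ _

lemma sh_zero (φ : PowerSeries ℂ) : sh 0 φ = φ := by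
  ext n; simp

lemma sh_sh (d e : ℕ) (φ : PowerSeries ℂ) : sh d (sh e φ) = sh (d + e) φ := by
  ext n; simp [add_assoc]

lemma sh_Fs (r : ℕ) (c : ℕ → ℂ) (a d : ℕ) : sh d (Fs r c a) = Fs r c (a + r * d) := by
  ext n; simp; ring_nf

lemma sh_add (d : ℕ) (φ ψ : PowerSeries ℂ) : sh d (φ + ψ) = sh d φ + sh d ψ := by
  ext n; simp

lemma sh_C_mul (d : ℕ) (a : ℂ) (φ : PowerSeries ℂ) : sh d (PowerSeries.C a * φ) = PowerSeries.C a * sh d φ := by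
  ext n; simp

lemma sh_sum (d : ℕ) (s : Finset ℕ) (f : ℕ → PowerSeries ℂ) :
    sh d (∑ p ∈ s, f p) = ∑ p ∈ s, sh d (f p) := by
  ext n; simp [map_sum]

lemma sh_one_mul (φ ψ : PowerSeries ℂ) :
    sh 1 (φ * ψ) = φ * sh 1 ψ + PowerSeries.C (PowerSeries.constantCoeff ψ) * sh 1 φ := by
  ext n
  rw [coeff_sh, PowerSeries.coeff_mul, Finset.Nat.sum_antidiagonal_succ', map_add,
    PowerSeries.coeff_mul, PowerSeries.coeff_C_mul, coeff_sh]
  rw [add_comm]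
  congr 1
  · exact Finset.sum_congr rfl fun p _ => by simp
  · simp [PowerSeries.coeff_zero_eq_constantCoeff, mul_comm]

lemma sh_mul (d : ℕ) (φ ψ : PowerSeries ℂ) :
    sh d (φ * ψ) = φ * sh d ψ + ∑ p ∈ range d, PowerSeries.C (PowerSeries.coeff p ψ) * sh (d - p) φ := by
  induction d generalizing ψ with
  | zero => simp [sh_zero]
  | succ d ih =>
      have h1 : sh (d + 1) (φ * ψ) = sh d (sh 1 (φ * ψ)) := by rw [sh_sh, add_comm]
      rw [h1, sh_one_mul, sh_add, ih (sh 1 ψ), sh_C_mul, sh_sh, sh_sh]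
      rw [Finset.sum_range_succ']
      simp only [coeff_sh, Nat.sub_zero, Nat.succ_sub_succ, zero_add,
        PowerSeries.coeff_zero_eq_constantCoeff]
      ring


/-- The factor `λ_i`. -/
def lam (r : ℕ) (c : ℕ → ℂ) (i : ℕ) : ℂ := if i = r - 1 then c r else 1

/-- One step of the branched-continued-fraction (Darboux) algorithm. -/
def peel (r : ℕ) (c : ℕ → ℂ) : ℕ → ℂ := fun m =>
  (lam r c (m % r))⁻¹ * PowerSeries.coeff (m / r) (Fs r c (m % r + 1) * (Fs r c 0)⁻¹)

/-- Normalisation invariant: the first `r` moments are `1`. -/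
def Inv (r : ℕ) (c : ℕ → ℂ) : Prop := ∀ i, i < r → c i = 1

lemma lam_ne_zero {r : ℕ} {c : ℕ → ℂ} (hcr : c r ≠ 0) (i : ℕ) : lam r c i ≠ 0 := by
  unfold lam; split <;> simp [hcr]

@[simp] lemma constantCoeff_Fs (r : ℕ) (c : ℕ → ℂ) (a : ℕ) :
    PowerSeries.constantCoeff (Fs r c a) = c a := by
  rw [← PowerSeries.coeff_zero_eq_constantCoeff]; simp

lemma F0_mul_inv {r : ℕ} {c : ℕ → ℂ} (h0 : c 0 = 1) :
    Fs r c 0 * (Fs r c 0)⁻¹ = 1 :=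
  PowerSeries.mul_inv_cancel _ (by rw [constantCoeff_Fs, h0]; exact one_ne_zero)

lemma Fs_peel {r : ℕ} (c : ℕ → ℂ) {i : ℕ} (hi : i < r) :
    Fs r (peel r c) i = PowerSeries.C (lam r c i)⁻¹ * (Fs r c (i + 1) * (Fs r c 0)⁻¹) := by
  have hr : 0 < r := lt_of_le_of_lt (Nat.zero_le i) hi
  ext n
  rw [coeff_Fs, PowerSeries.coeff_C_mul]
  show peel r c (i + r * n) = _
  unfold peel
  rw [Nat.add_mul_mod_self_left, Nat.mod_eq_of_lt hi,
    Nat.add_mul_div_left _ _ hr, Nat.div_eq_of_lt hi, zero_add]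

lemma Fs_succ_eq {r : ℕ} {c : ℕ → ℂ} (h0 : c 0 = 1) (hcr : c r ≠ 0) {i : ℕ} (hi : i < r) :
    Fs r c (i + 1) = PowerSeries.C (lam r c i) * (Fs r c 0 * Fs r (peel r c) i) := by
  rw [Fs_peel c hi]
  have h1 : (PowerSeries.C (lam r c i)) * (PowerSeries.C (lam r c i)⁻¹) = 1 := by
    rw [← map_mul, mul_inv_cancel₀ (lam_ne_zero hcr i), map_one]
  calc Fs r c (i + 1)
      = ((PowerSeries.C (lam r c i)) * (PowerSeries.C (lam r c i)⁻¹)) *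
        ((Fs r c 0 * (Fs r c 0)⁻¹) * Fs r c (i + 1)) := by
        rw [h1, F0_mul_inv h0, one_mul, one_mul]
    _ = PowerSeries.C (lam r c i) * (Fs r c 0 * (PowerSeries.C (lam r c i)⁻¹ * (Fs r c (i + 1) * (Fs r c 0)⁻¹))) := by
        ring

lemma Inv_peel {r : ℕ} {c : ℕ → ℂ} (hInv : Inv r c) (hr : 1 ≤ r) (hcr : c r ≠ 0) :
    Inv r (peel r c) := by
  intro i hi
  have h0 : c 0 = 1 := hInv 0 hr
  have : peel r c i = PowerSeries.coeff 0 (Fs r (peel r c) i) := by simp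
  rw [this, PowerSeries.coeff_zero_eq_constantCoeff, Fs_peel c hi, map_mul, map_mul,
    PowerSeries.constantCoeff_C, constantCoeff_Fs, PowerSeries.constantCoeff_inv,
    constantCoeff_Fs, h0]
  unfold lam
  by_cases h : i = r - 1
  · have : i + 1 = r := by omega
    rw [this, if_pos h, inv_one, mul_one]
    exact inv_mul_cancel₀ hcr
  · have : i + 1 < r := by omega
    simp [h, hInv _ this]

lemma sum_range_ite_lt {M : Type*} [AddCommMonoid M] (f : ℕ → M) (a b : ℕ) (h : a ≤ b) :
    ∑ e ∈ range b, (if e < a then f e else 0) = ∑ e ∈ range a, f e := by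
  rw [← Finset.sum_subset (Finset.range_subset_range.2 h)
    (fun x _ hnx => by rw [Finset.mem_range] at hnx; simp [if_neg hnx])]
  exact Finset.sum_congr rfl fun x hx => by rw [Finset.mem_range] at hx; rw [if_pos hx]

/-- Collection helper: a sum of `S2`-type expansions is again of that shape. -/
lemma collect {r : ℕ} (c : ℕ → ℂ) (G : ℕ → PowerSeries ℂ) (β : ℕ → ℂ) (W : ℕ → ℕ → ℂ) (q : ℕ)
    (h : ∀ p, p < q → Fs r c (r * (q - p)) =
      Fs r c 0 * ∑ e ∈ range (q - p), PowerSeries.C (W p e) * G e) :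
    ∑ p ∈ range q, PowerSeries.C (β p) * Fs r c (r * (q - p)) =
      Fs r c 0 * ∑ e ∈ range q,
        PowerSeries.C (∑ p ∈ range q, if e < q - p then β p * W p e else 0) * G e := by
  have step1 : ∀ p ∈ range q, PowerSeries.C (β p) * Fs r c (r * (q - p)) =
      ∑ e ∈ range q, Fs r c 0 * ((if e < q - p then PowerSeries.C (β p * W p e) else 0) * G e) := by
    intro p hp
    rw [Finset.mem_range] at hp
    rw [h p hp, Finset.mul_sum, Finset.mul_sum]
    rw [show (∑ e ∈ range q, Fs r c 0 * ((if e < q - p then PowerSeries.C (β p * W p e) else 0) * G e))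
        = ∑ e ∈ range q, (if e < q - p then Fs r c 0 * (PowerSeries.C (β p * W p e) * G e) else 0) from
      Finset.sum_congr rfl fun e _ => by split <;> simp]
    rw [sum_range_ite_lt (fun e => Fs r c 0 * (PowerSeries.C (β p * W p e) * G e)) (q - p) q (by omega)]
    apply Finset.sum_congr rfl
    intro e he
    rw [map_mul]
    ring
  rw [Finset.sum_congr rfl step1, Finset.sum_comm]
  rw [Finset.mul_sum]
  apply Finset.sum_congr rfl
  intro e he
  rw [← Finset.mul_sum, map_sum, Finset.sum_mul]
  congr 1
  apply Finset.sum_congr rfl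
  intro p hp
  split <;> simp


lemma S2 {r : ℕ} {c : ℕ → ℂ} (hr : 1 ≤ r) (h0 : c 0 = 1) (hcr : c r ≠ 0) :
    ∀ d, 1 ≤ d →
    ∃ w : ℕ → ℂ, w (d - 1) = c r ∧
      Fs r c (r * d) = Fs r c 0 *
        ∑ e ∈ range d, PowerSeries.C (w e) * Fs r (peel r c) (r - 1 + r * e) := by
  have hlam : lam r c (r - 1) = c r := if_pos rfl
  have hbase : Fs r c r = PowerSeries.C (c r) * (Fs r c 0 * Fs r (peel r c) (r - 1)) := by
    have := Fs_succ_eq h0 hcr (show r - 1 < r by omega)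
    rw [show r - 1 + 1 = r by omega, hlam] at this
    exact this
  intro d
  induction d using Nat.strong_induction_on with
  | _ d IH =>
    intro hd
    rcases Nat.exists_eq_add_of_le hd with ⟨k, hk⟩
    subst hk
    rcases Nat.eq_zero_or_pos k with hk0 | hk1
    · subst hk0
      refine ⟨fun _ => c r, by simp, ?_⟩
      beta_reduce
      rw [show r * (1 + 0) = r by ring, hbase, Finset.sum_range_one,
        show r * 0 = 0 by ring, add_zero]
      ring
    -- inductive step : d = 1 + k with k ≥ 1
    · have IH' : ∀ p : ℕ, ∃ w : ℕ → ℂ, p < k →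
          Fs r c (r * (k - p)) = Fs r c 0 *
            ∑ e ∈ range (k - p), PowerSeries.C (w e) * Fs r (peel r c) (r - 1 + r * e) := by
        intro p
        by_cases hp : p < k
        · obtain ⟨w, _, hw⟩ := IH (k - p) (by omega) (by omega)
          exact ⟨w, fun _ => hw⟩
        · exact ⟨0, fun h => absurd h hp⟩
      choose W hW using IH'
      have key : Fs r c (r * (1 + k)) = sh k (Fs r c r) := by
        rw [sh_Fs]; congr 1; ring
      have expand : sh k (Fs r c r) =
          PowerSeries.C (c r) * (Fs r c 0 * sh k (Fs r (peel r c) (r - 1)) +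
            ∑ p ∈ range k, PowerSeries.C (PowerSeries.coeff p (Fs r (peel r c) (r - 1))) * sh (k - p) (Fs r c 0)) := by
        rw [hbase, sh_C_mul, sh_mul]
      have hshG0 : sh k (Fs r (peel r c) (r - 1)) = Fs r (peel r c) (r - 1 + r * k) := sh_Fs _ _ _ _
      have hcol := collect c (fun e => Fs r (peel r c) (r - 1 + r * e))
        (fun p => PowerSeries.coeff p (Fs r (peel r c) (r - 1))) W k (fun p hp => hW p hp)
      beta_reduce at hcol
      refine ⟨fun e => if e = k then c r else
        c r * ∑ p ∈ range k, (if e < k - p then PowerSeries.coeff p (Fs r (peel r c) (r - 1)) * W p e else 0),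
        by simp, ?_⟩
      rw [key, expand, hshG0,
        Finset.sum_congr rfl (fun p hp => by rw [sh_Fs, zero_add] : ∀ p ∈ range k,
          PowerSeries.C (PowerSeries.coeff p (Fs r (peel r c) (r - 1))) * sh (k - p) (Fs r c 0)
            = PowerSeries.C (PowerSeries.coeff p (Fs r (peel r c) (r - 1))) * Fs r c (r * (k - p))),
        hcol]
      rw [show (1 + k) = k + 1 by ring, Finset.sum_range_succ]
      beta_reduce
      rw [if_pos rfl]
      have hterm : ∀ e ∈ range k,
          PowerSeries.C (if e = k then c r else
            c r * ∑ p ∈ range k, (if e < k - p then PowerSeries.coeff p (Fs r (peel r c) (r - 1)) * W p e else 0))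
            * Fs r (peel r c) (r - 1 + r * e)
          = PowerSeries.C (c r) * (PowerSeries.C (∑ p ∈ range k,
              (if e < k - p then PowerSeries.coeff p (Fs r (peel r c) (r - 1)) * W p e else 0))
              * Fs r (peel r c) (r - 1 + r * e)) := by
        intro e he
        rw [if_neg (by rw [Finset.mem_range] at he; omega), map_mul, mul_assoc]
      rw [Finset.sum_congr rfl hterm, ← Finset.mul_sum]
      ring

lemma colA {r : ℕ} {c : ℕ → ℂ} (hr : 1 ≤ r) (h0 : c 0 = 1) (hcr : c r ≠ 0)
    {i : ℕ} (hi : i < r) (q : ℕ) :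
    ∃ u : ℕ → ℂ, Fs r c (i + 1 + r * q)
      = PowerSeries.C (lam r c i) * (Fs r c 0 * (Fs r (peel r c) (i + r * q)
          + ∑ e ∈ range q, PowerSeries.C (u e) * Fs r (peel r c) (r - 1 + r * e))) := by
  have IH' : ∀ p : ℕ, ∃ w : ℕ → ℂ, p < q →
      Fs r c (r * (q - p)) = Fs r c 0 *
        ∑ e ∈ range (q - p), PowerSeries.C (w e) * Fs r (peel r c) (r - 1 + r * e) := by
    intro p
    by_cases hp : p < q
    · obtain ⟨w, _, hw⟩ := S2 hr h0 hcr (q - p) (by omega)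
      exact ⟨w, fun _ => hw⟩
    · exact ⟨0, fun h => absurd h hp⟩
  choose W hW using IH'
  have key : Fs r c (i + 1 + r * q) = sh q (Fs r c (i + 1)) := (sh_Fs _ _ _ _).symm
  have expand : sh q (Fs r c (i + 1)) =
      PowerSeries.C (lam r c i) * (Fs r c 0 * sh q (Fs r (peel r c) i) +
        ∑ p ∈ range q, PowerSeries.C (PowerSeries.coeff p (Fs r (peel r c) i)) * sh (q - p) (Fs r c 0)) := by
    rw [Fs_succ_eq h0 hcr hi, sh_C_mul, sh_mul]
  have hshGi : sh q (Fs r (peel r c) i) = Fs r (peel r c) (i + r * q) := sh_Fs _ _ _ _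
  have hcol := collect c (fun e => Fs r (peel r c) (r - 1 + r * e))
    (fun p => PowerSeries.coeff p (Fs r (peel r c) i)) W q (fun p hp => hW p hp)
  beta_reduce at hcol
  refine ⟨fun e => ∑ p ∈ range q,
    (if e < q - p then PowerSeries.coeff p (Fs r (peel r c) i) * W p e else 0), ?_⟩
  rw [key, expand, hshGi,
    Finset.sum_congr rfl (fun p hp => by rw [sh_Fs, zero_add] : ∀ p ∈ range q,
      PowerSeries.C (PowerSeries.coeff p (Fs r (peel r c) i)) * sh (q - p) (Fs r c 0)
        = PowerSeries.C (PowerSeries.coeff p (Fs r (peel r c) i)) * Fs r c (r * (q - p))),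
    hcol]
  beta_reduce
  ring


lemma coeff_mul_fin {m : ℕ} (φ ψ : PowerSeries ℂ) (n : Fin m) :
    PowerSeries.coeff (n : ℕ) (φ * ψ) =
      ∑ p : Fin m, (if (p : ℕ) ≤ (n : ℕ) then PowerSeries.coeff ((n : ℕ) - (p : ℕ)) φ else 0)
        * PowerSeries.coeff (p : ℕ) ψ := by
  rw [mul_comm, PowerSeries.coeff_mul, Finset.Nat.sum_antidiagonal_eq_sum_range_succ_mk]
  rw [Fin.sum_univ_eq_sum_range
    (fun p => (if p ≤ (n : ℕ) then PowerSeries.coeff ((n : ℕ) - p) φ else 0) * PowerSeries.coeff p ψ) m]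
  rw [show (∑ p ∈ range m, (if p ≤ (n : ℕ) then PowerSeries.coeff ((n : ℕ) - p) φ else 0) * PowerSeries.coeff p ψ)
      = ∑ p ∈ range m, (if p < (n : ℕ) + 1 then PowerSeries.coeff (↑n - p) φ * PowerSeries.coeff p ψ else 0) from
    Finset.sum_congr rfl fun p _ => by by_cases h : p ≤ (n : ℕ) <;>
      simp [h, Nat.lt_succ_iff, mul_comm]]
  rw [sum_range_ite_lt (fun p => PowerSeries.coeff ((n : ℕ) - p) φ * PowerSeries.coeff p ψ) ((n : ℕ) + 1) m n.2]
  exact Finset.sum_congr rfl fun p _ => by rw [mul_comm]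

/-- The key determinant transfer lemma: if every column series of `A` is `φ0` times a
suitable triangular combination of the column series of `B`, the determinants are
proportional. -/
lemma det_transfer {m : ℕ} (A B : Matrix (Fin m) (Fin m) ℂ) (φ0 : PowerSeries ℂ)
    (h00 : PowerSeries.coeff 0 φ0 = 1)
    (SA : ℕ → PowerSeries ℂ) (SB : ℕ → PowerSeries ℂ)
    (hA : ∀ (n ℓ : Fin m), A n ℓ = PowerSeries.coeff (n : ℕ) (SA (ℓ : ℕ)))
    (hB : ∀ (n ℓ : Fin m), B n ℓ = PowerSeries.coeff (n : ℕ) (SB (ℓ : ℕ)))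
    (dd : ℕ → ℂ) (qq : ℕ → ℕ) (u : ℕ → ℕ → ℂ) (φmap : ℕ → ℕ)
    (hφ : ∀ ℓ : Fin m, ∀ e, e < qq (ℓ : ℕ) → φmap e < (ℓ : ℕ))
    (hcol : ∀ ℓ : Fin m, SA (ℓ : ℕ) = φ0 * (PowerSeries.C (dd (ℓ : ℕ)) * SB (ℓ : ℕ) +
        ∑ e ∈ range (qq (ℓ : ℕ)), PowerSeries.C (u (ℓ : ℕ) e) * SB (φmap e))) :
    A.det = (∏ ℓ : Fin m, dd (ℓ : ℕ)) * B.det := by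
  classical
  set U : Matrix (Fin m) (Fin m) ℂ := fun ℓ' ℓ =>
    (if ℓ' = ℓ then dd (ℓ : ℕ) else 0) +
      ∑ e ∈ range (qq (ℓ : ℕ)), (if (ℓ' : ℕ) = φmap e then u (ℓ : ℕ) e else 0) with hU
  set L : Matrix (Fin m) (Fin m) ℂ := fun n p =>
    if (p : ℕ) ≤ (n : ℕ) then PowerSeries.coeff ((n : ℕ) - (p : ℕ)) φ0 else 0 with hL
  have hBU : ∀ (p ℓ : Fin m), (B * U) p ℓ =
      PowerSeries.coeff (p : ℕ) (PowerSeries.C (dd (ℓ : ℕ)) * SB (ℓ : ℕ) +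
        ∑ e ∈ range (qq (ℓ : ℕ)), PowerSeries.C (u (ℓ : ℕ) e) * SB (φmap e)) := by
    intro p ℓ
    rw [Matrix.mul_apply]
    simp only [hU]
    rw [show (∑ ℓ' : Fin m, B p ℓ' *
        ((if ℓ' = ℓ then dd (ℓ : ℕ) else 0) +
          ∑ e ∈ range (qq (ℓ : ℕ)), (if (ℓ' : ℕ) = φmap e then u (ℓ : ℕ) e else 0)))
        = (∑ ℓ' : Fin m, B p ℓ' * (if ℓ' = ℓ then dd (ℓ : ℕ) else 0)) +
          ∑ ℓ' : Fin m, ∑ e ∈ range (qq (ℓ : ℕ)),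
            B p ℓ' * (if (ℓ' : ℕ) = φmap e then u (ℓ : ℕ) e else 0) from by
      rw [← Finset.sum_add_distrib]
      exact Finset.sum_congr rfl fun ℓ' _ => by rw [mul_add, Finset.mul_sum]]
    rw [Finset.sum_comm]
    rw [map_add]
    congr 1
    · rw [Finset.sum_eq_single ℓ]
      · rw [if_pos rfl, hB, PowerSeries.coeff_C_mul, mul_comm]
      · intro b _ hb; rw [if_neg hb, mul_zero]
      · intro h; exact absurd (Finset.mem_univ ℓ) h
    · rw [map_sum]
      apply Finset.sum_congr rfl
      intro e he
      rw [Finset.mem_range] at he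
      have hm : φmap e < m := lt_trans (hφ ℓ e he) ℓ.2
      rw [Finset.sum_eq_single (⟨φmap e, hm⟩ : Fin m)]
      · rw [if_pos rfl, hB, PowerSeries.coeff_C_mul, mul_comm]
      · intro b _ hb
        rw [if_neg (fun hc => hb (Fin.ext hc)), mul_zero]
      · intro h; exact absurd (Finset.mem_univ _) h
  have hALBU : A = L * (B * U) := by
    ext n ℓ
    rw [Matrix.mul_apply, hA, hcol ℓ, coeff_mul_fin]
    apply Finset.sum_congr rfl
    intro p _
    rw [hBU]
  have hdetL : L.det = 1 := by
    have hLtri : L.BlockTriangular ⇑OrderDual.toDual := by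
      intro i j hij
      have h1 : (i : ℕ) < (j : ℕ) := hij
      simp only [hL]
      rw [if_neg (by omega)]
    rw [Matrix.det_of_lowerTriangular L hLtri]
    rw [Finset.prod_congr rfl (fun i _ => by
      simp only [hL]; rw [if_pos (le_refl _), Nat.sub_self, h00] : ∀ i ∈ univ, L i i = 1)]
    exact Finset.prod_const_one
  have hdetU : U.det = ∏ ℓ : Fin m, dd (ℓ : ℕ) := by
    have hUtri : U.BlockTriangular id := by
      intro i j hij
      have h2 : (j : ℕ) < (i : ℕ) := hij
      simp only [hU]
      have hz : ∀ e ∈ range (qq (j : ℕ)),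
          (if (i : ℕ) = φmap e then u (j : ℕ) e else 0) = 0 := by
        intro e he
        rw [if_neg (fun hc => by
          have h1 := hφ j e (Finset.mem_range.1 he)
          omega)]
      have hne : i ≠ j := by simpa using Fin.ne_of_gt hij
      rw [Finset.sum_congr rfl hz, if_neg hne]
      simp
    rw [Matrix.det_of_upperTriangular hUtri]
    apply Finset.prod_congr rfl
    intro i _
    simp only [hU]
    have hz : ∀ e ∈ range (qq (i : ℕ)),
        (if (i : ℕ) = φmap e then u (i : ℕ) e else 0) = 0 := by
      intro e he
      rw [if_neg (fun hc => by
        have h1 := hφ i e (Finset.mem_range.1 he)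
        omega)]
    rw [Finset.sum_congr rfl hz]
    simp
  rw [hALBU, ← Matrix.mul_assoc, Matrix.det_mul, Matrix.det_mul, hdetL, hdetU]
  ring


/-- The leading principal `m × m` minor of the shifted moment matrix. -/
def Dm (r : ℕ) (c : ℕ → ℂ) (j m : ℕ) : ℂ :=
  Matrix.det (Matrix.of fun n ℓ : Fin m => c (j + ℓ + r * n))

set_option maxHeartbeats 1000000 in
lemma lemA {r : ℕ} {c : ℕ → ℂ} (h0 : c 0 = 1) (hcr : c r ≠ 0)
    {j : ℕ} (hj : j < r) (m : ℕ) :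
    ∃ z : ℂ, z ≠ 0 ∧ Dm r c (j + 1) m = z * Dm r (peel r c) j m := by
  have hr : 1 ≤ r := by omega
  have hcolA : ∀ x : ℕ, ∃ u : ℕ → ℂ,
      Fs r c (j + 1 + x) = Fs r c 0 * (PowerSeries.C (lam r c ((j + x) % r)) * Fs r (peel r c) (j + x) +
        ∑ e ∈ range ((j + x) / r), PowerSeries.C (lam r c ((j + x) % r) * u e) *
          Fs r (peel r c) (j + (r - 1 + r * e - j))) := by
    intro x
    obtain ⟨u, hu⟩ := colA hr h0 hcr (Nat.mod_lt (j + x) (by omega) : (j + x) % r < r) ((j + x) / r)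
    refine ⟨u, ?_⟩
    have hidx1 : (j + x) % r + 1 + r * ((j + x) / r) = j + 1 + x := by
      have := Nat.mod_add_div (j + x) r; omega
    have hidx2 : (j + x) % r + r * ((j + x) / r) = j + x := by
      have := Nat.mod_add_div (j + x) r; omega
    rw [hidx1, hidx2] at hu
    rw [hu]
    rw [Finset.sum_congr rfl (fun e he => by
      rw [show j + (r - 1 + r * e - j) = r - 1 + r * e by omega, map_mul, mul_assoc] :
      ∀ e ∈ range ((j + x) / r), PowerSeries.C (lam r c ((j + x) % r) * u e) *
          Fs r (peel r c) (j + (r - 1 + r * e - j))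
        = PowerSeries.C (lam r c ((j + x) % r)) * (PowerSeries.C (u e) * Fs r (peel r c) (r - 1 + r * e)))]
    rw [← Finset.mul_sum]
    ring
  choose uu huu using hcolA
  refine ⟨∏ ℓ : Fin m, lam r c ((j + (ℓ : ℕ)) % r), Finset.prod_ne_zero_iff.2
    (fun ℓ _ => lam_ne_zero hcr _), ?_⟩
  unfold Dm
  have hA : ∀ n ℓ : Fin m, (Matrix.of fun n ℓ : Fin m => c (j + 1 + ↑ℓ + r * ↑n)) n ℓ
      = PowerSeries.coeff (n : ℕ) (Fs r c (j + 1 + (ℓ : ℕ))) := by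
    intro n ℓ; simp only [Matrix.of_apply, coeff_Fs]
  have hB : ∀ n ℓ : Fin m, (Matrix.of fun n ℓ : Fin m => peel r c (j + ↑ℓ + r * ↑n)) n ℓ
      = PowerSeries.coeff (n : ℕ) (Fs r (peel r c) (j + (ℓ : ℕ))) := by
    intro n ℓ; simp only [Matrix.of_apply, coeff_Fs]
  have hφ : ∀ ℓ : Fin m, ∀ e, e < (j + (ℓ : ℕ)) / r → r - 1 + r * e - j < (ℓ : ℕ) := by
    intro ℓ e he
    have hs := Nat.mod_add_div (j + (ℓ : ℕ)) r
    have hmlt : (j + (ℓ : ℕ)) % r < r := Nat.mod_lt _ (by omega)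
    have h1 : r * (e + 1) ≤ r * ((j + (ℓ : ℕ)) / r) := Nat.mul_le_mul_left r (by omega)
    have h2 : r * e + r ≤ r * ((j + (ℓ : ℕ)) / r) := by
      rw [Nat.mul_add, Nat.mul_one] at h1; omega
    omega
  exact det_transfer (Matrix.of fun n ℓ : Fin m => c (j + 1 + ↑ℓ + r * ↑n))
    (Matrix.of fun n ℓ : Fin m => peel r c (j + ↑ℓ + r * ↑n)) (Fs r c 0) (by simpa using h0)
    (fun x => Fs r c (j + 1 + x)) (fun x => Fs r (peel r c) (j + x)) hA hB
    (fun x => lam r c ((j + x) % r)) (fun x => (j + x) / r)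
    (fun x e => lam r c ((j + x) % r) * uu x e) (fun e => r - 1 + r * e - j)
    hφ (fun ℓ => huu (ℓ : ℕ))


lemma colB {r : ℕ} {c : ℕ → ℂ} (hr : 1 ≤ r) (h0 : c 0 = 1) (hcr : c r ≠ 0) (x : ℕ) :
    ∃ (u : ℕ → ℂ) (qq : ℕ),
      (∀ e, e < qq → r - 1 + r * e < x) ∧
      sh 1 ((Fs r c 0)⁻¹ * Fs r c (x + 1)) =
        PowerSeries.C (if (x + 1) % r = 0 then c r else 1) * Fs r (peel r c) (r + x)
          + ∑ e ∈ range qq, PowerSeries.C (u e) * Fs r (peel r c) (r + (r - 1 + r * e)) := by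
  have hinv : (Fs r c 0)⁻¹ * Fs r c 0 = 1 := by rw [mul_comm]; exact F0_mul_inv h0
  have hxd := Nat.mod_add_div (x + 1) r
  have hxm : (x + 1) % r < r := Nat.mod_lt _ (by omega)
  by_cases hi : (x + 1) % r = 0
  -- case i = 0 : use S2
  · have hq1 : 1 ≤ (x + 1) / r := by
      by_contra hcon
      have h : (x + 1) / r = 0 := Nat.lt_one_iff.1 (not_le.1 hcon)
      rw [h, Nat.mul_zero, Nat.add_zero] at hxd
      omega
    obtain ⟨q', hsplit⟩ : ∃ q', (x + 1) / r = q' + 1 := ⟨(x + 1) / r - 1, by omega⟩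
    obtain ⟨w, hw1, hw2⟩ := S2 hr h0 hcr ((x + 1) / r) hq1
    rw [hsplit] at hw1 hw2
    rw [Nat.add_sub_cancel] at hw1
    have hx : x + 1 = r * q' + r := by
      rw [hsplit, Nat.mul_add, Nat.mul_one] at hxd
      omega
    refine ⟨w, q', ?_, ?_⟩
    · intro e he
      have h1 : r * (e + 1) ≤ r * q' := Nat.mul_le_mul_left r (by omega)
      rw [Nat.mul_add, Nat.mul_one] at h1
      omega
    · rw [show Fs r c (x + 1) = Fs r c (r * (q' + 1)) by
        rw [show x + 1 = r * (q' + 1) by rw [Nat.mul_add, Nat.mul_one]; omega]]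
      rw [hw2, ← mul_assoc, hinv, one_mul, sh_sum]
      rw [Finset.sum_congr rfl (fun e _ => by
        rw [sh_C_mul, sh_Fs] :
        ∀ e ∈ range (q' + 1), sh 1 (PowerSeries.C (w e) * Fs r (peel r c) (r - 1 + r * e))
          = PowerSeries.C (w e) * Fs r (peel r c) (r - 1 + r * e + r * 1))]
      rw [Finset.sum_range_succ, if_pos hi, hw1]
      rw [show r - 1 + r * q' + r * 1 = r + x by rw [Nat.mul_one]; omega]
      rw [Finset.sum_congr rfl (fun e _ => by
        rw [show r - 1 + r * e + r * 1 = r + (r - 1 + r * e) by rw [Nat.mul_one]; omega] :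
        ∀ e ∈ range q', PowerSeries.C (w e) * Fs r (peel r c) (r - 1 + r * e + r * 1)
          = PowerSeries.C (w e) * Fs r (peel r c) (r + (r - 1 + r * e)))]
      ring
  -- case i ≥ 1 : use colA
  · have hi1 : 1 ≤ (x + 1) % r := by omega
    obtain ⟨u, hu⟩ := colA hr h0 hcr (show (x + 1) % r - 1 < r by omega) ((x + 1) / r)
    have hlam1 : lam r c ((x + 1) % r - 1) = 1 := if_neg (by omega)
    rw [hlam1, map_one, one_mul] at hu
    rw [show (x + 1) % r - 1 + 1 + r * ((x + 1) / r) = x + 1 by omega] at hu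
    refine ⟨u, (x + 1) / r, ?_, ?_⟩
    · intro e he
      have h1 : r * (e + 1) ≤ r * ((x + 1) / r) := Nat.mul_le_mul_left r (by omega)
      rw [Nat.mul_add, Nat.mul_one] at h1
      omega
    · rw [hu, ← mul_assoc, hinv, one_mul, sh_add, sh_Fs, sh_sum]
      rw [Finset.sum_congr rfl (fun e _ => by
        rw [sh_C_mul, sh_Fs, show r - 1 + r * e + r * 1 = r + (r - 1 + r * e) by
          rw [Nat.mul_one]; omega] :
        ∀ e ∈ range ((x + 1) / r), sh 1 (PowerSeries.C (u e) * Fs r (peel r c) (r - 1 + r * e))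
          = PowerSeries.C (u e) * Fs r (peel r c) (r + (r - 1 + r * e)))]
      rw [if_neg hi, map_one, one_mul]
      rw [show (x + 1) % r - 1 + r * ((x + 1) / r) + r * 1 = r + x by rw [Nat.mul_one]; omega]

lemma det_toeplitz_one {m : ℕ} (φ0 : PowerSeries ℂ) (h00 : PowerSeries.coeff 0 φ0 = 1) :
    (Matrix.of fun n p : Fin m =>
      if (p : ℕ) ≤ (n : ℕ) then PowerSeries.coeff ((n : ℕ) - (p : ℕ)) φ0 else 0).det = 1 := by
  have htri : (Matrix.of fun n p : Fin m =>
      if (p : ℕ) ≤ (n : ℕ) then PowerSeries.coeff ((n : ℕ) - (p : ℕ)) φ0 else 0).BlockTriangular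
      ⇑OrderDual.toDual := by
    intro i j hij
    have h1 : (i : ℕ) < (j : ℕ) := hij
    simp only [Matrix.of_apply]
    rw [if_neg (by omega)]
  rw [Matrix.det_of_lowerTriangular _ htri]
  rw [Finset.prod_congr rfl (fun i _ => by
    simp only [Matrix.of_apply]; rw [if_pos (le_refl _), Nat.sub_self, h00] :
    ∀ i ∈ univ, (Matrix.of fun n p : Fin m =>
      if (p : ℕ) ≤ (n : ℕ) then PowerSeries.coeff ((n : ℕ) - (p : ℕ)) φ0 else 0) i i = 1)]
  exact Finset.prod_const_one

lemma lemB {r : ℕ} {c : ℕ → ℂ} (hr : 1 ≤ r) (h0 : c 0 = 1) (hcr : c r ≠ 0) (m : ℕ) :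
    ∃ z : ℂ, z ≠ 0 ∧ Dm r c 0 (m + 1) = z * Dm r (peel r c) r m := by
  classical
  set Ahat : Matrix (Fin (m+1)) (Fin (m+1)) ℂ :=
    Matrix.of (fun n ℓ : Fin (m+1) => PowerSeries.coeff (n : ℕ) ((Fs r c 0)⁻¹ * Fs r c (ℓ : ℕ))) with hAhat
  set L0 : Matrix (Fin (m+1)) (Fin (m+1)) ℂ :=
    Matrix.of (fun n p : Fin (m+1) =>
      if (p : ℕ) ≤ (n : ℕ) then PowerSeries.coeff ((n : ℕ) - (p : ℕ)) (Fs r c 0) else 0) with hL0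
  -- step (a) : A = L0 * Ahat
  have hstepa : (Matrix.of fun n ℓ : Fin (m+1) => c (0 + ↑ℓ + r * ↑n)) = L0 * Ahat := by
    ext n ℓ
    rw [Matrix.mul_apply]
    have h1 : Fs r c (ℓ : ℕ) = Fs r c 0 * ((Fs r c 0)⁻¹ * Fs r c (ℓ : ℕ)) := by
      rw [← mul_assoc, F0_mul_inv h0, one_mul]
    have h2 : (Matrix.of fun n ℓ : Fin (m+1) => c (0 + ↑ℓ + r * ↑n)) n ℓ
        = PowerSeries.coeff (n : ℕ) (Fs r c (ℓ : ℕ)) := by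
      simp only [Matrix.of_apply, coeff_Fs]
      congr 1
      omega
    rw [h2, h1, coeff_mul_fin]
    apply Finset.sum_congr rfl
    intro p _
    simp only [hL0, hAhat, Matrix.of_apply]
  -- step (b) : expansion along the first column
  have hcol0 : ∀ n : Fin (m+1), Ahat n 0 = if n = 0 then 1 else 0 := by
    intro n
    simp only [hAhat, Matrix.of_apply]
    have hz : ((0 : Fin (m+1)) : ℕ) = 0 := rfl
    rw [hz, show (Fs r c 0)⁻¹ * Fs r c 0 = 1 by rw [mul_comm]; exact F0_mul_inv h0,
      PowerSeries.coeff_one]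
    exact if_congr (Fin.ext_iff (a := n) (b := 0)).symm rfl rfl
  have hstepb : Ahat.det = (Ahat.submatrix Fin.succ Fin.succ).det := by
    rw [Matrix.det_succ_column_zero]
    rw [Finset.sum_eq_single (0 : Fin (m+1))]
    · rw [hcol0, if_pos rfl, Fin.succAbove_zero]
      simp
    · intro b _ hb
      rw [hcol0, if_neg hb]
      ring
    · intro h
      exact absurd (Finset.mem_univ _) h
  -- step (c) : det_transfer for the submatrix
  obtain ⟨uB, qB, hres⟩ : ∃ (uB : ℕ → ℕ → ℂ) (qB : ℕ → ℕ),
      ∀ x : ℕ, (∀ e, e < qB x → r - 1 + r * e < x) ∧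
      sh 1 ((Fs r c 0)⁻¹ * Fs r c (x + 1)) =
        PowerSeries.C (if (x + 1) % r = 0 then c r else 1) * Fs r (peel r c) (r + x)
          + ∑ e ∈ range (qB x), PowerSeries.C (uB x e) * Fs r (peel r c) (r + (r - 1 + r * e)) := by
    have h := fun x => colB hr h0 hcr x
    choose u qq h1 h2 using h
    exact ⟨u, qq, fun x => ⟨h1 x, h2 x⟩⟩
  have hA : ∀ n ℓ : Fin m, (Ahat.submatrix Fin.succ Fin.succ) n ℓ
      = PowerSeries.coeff (n : ℕ) (sh 1 ((Fs r c 0)⁻¹ * Fs r c ((ℓ : ℕ) + 1))) := by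
    intro n ℓ
    simp only [Matrix.submatrix_apply, hAhat, Matrix.of_apply, coeff_sh, Fin.val_succ]
  have hB : ∀ n ℓ : Fin m, (Matrix.of fun n ℓ : Fin m => peel r c (r + ↑ℓ + r * ↑n)) n ℓ
      = PowerSeries.coeff (n : ℕ) (Fs r (peel r c) (r + (ℓ : ℕ))) := by
    intro n ℓ; simp only [Matrix.of_apply, coeff_Fs]
  have hφ : ∀ ℓ : Fin m, ∀ e, e < qB (ℓ : ℕ) → r - 1 + r * e < (ℓ : ℕ) :=
    fun ℓ e he => (hres (ℓ : ℕ)).1 e he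
  have hcolver : ∀ ℓ : Fin m, sh 1 ((Fs r c 0)⁻¹ * Fs r c ((ℓ : ℕ) + 1)) =
      (1 : PowerSeries ℂ) * (PowerSeries.C (if ((ℓ : ℕ) + 1) % r = 0 then c r else 1) *
          Fs r (peel r c) (r + (ℓ : ℕ))
        + ∑ e ∈ range (qB (ℓ : ℕ)), PowerSeries.C (uB (ℓ : ℕ) e) *
            Fs r (peel r c) (r + (r - 1 + r * e))) := by
    intro ℓ
    rw [one_mul]
    exact (hres (ℓ : ℕ)).2
  have hstepc := det_transfer (Ahat.submatrix Fin.succ Fin.succ)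
    (Matrix.of fun n ℓ : Fin m => peel r c (r + ↑ℓ + r * ↑n)) (1 : PowerSeries ℂ)
    (by simp)
    (fun x => sh 1 ((Fs r c 0)⁻¹ * Fs r c (x + 1))) (fun x => Fs r (peel r c) (r + x))
    hA hB (fun x => if (x + 1) % r = 0 then c r else 1) qB uB (fun e => r - 1 + r * e)
    hφ hcolver
  refine ⟨∏ ℓ : Fin m, (if ((ℓ : ℕ) + 1) % r = 0 then c r else 1),
    Finset.prod_ne_zero_iff.2 (fun ℓ _ => by split <;> simp [hcr]), ?_⟩
  show (Matrix.of fun n ℓ : Fin (m+1) => c (0 + ↑ℓ + r * ↑n)).det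
      = _ * (Matrix.of fun n ℓ : Fin m => peel r c (r + ↑ℓ + r * ↑n)).det
  rw [hstepa, Matrix.det_mul, hL0, det_toeplitz_one (Fs r c 0) (by simpa using h0), one_mul,
    hstepb, hstepc]


/-- Iterates of the peeling map. -/
def iter (r : ℕ) : ℕ → (ℕ → ℂ) → (ℕ → ℂ)
  | 0, c => c
  | k + 1, c => peel r (iter r k c)

@[simp] lemma iter_zero (r : ℕ) (c : ℕ → ℂ) : iter r 0 c = c := rfl

lemma iter_succ (r k : ℕ) (c : ℕ → ℂ) : iter r (k + 1) c = peel r (iter r k c) := rfl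

lemma iter_succ_left (r k : ℕ) (c : ℕ → ℂ) : iter r (k + 1) c = iter r k (peel r c) := by
  induction k with
  | zero => rfl
  | succ k ih => rw [iter_succ, ih, ← iter_succ]

/-- The algorithm succeeds at every level. -/
def Good (r : ℕ) (c : ℕ → ℂ) : Prop := Inv r c ∧ ∀ k, (iter r k c) r ≠ 0

lemma Good_peel {r : ℕ} {c : ℕ → ℂ} (hr : 1 ≤ r) (h : Good r c) : Good r (peel r c) := by
  obtain ⟨hInv, hne⟩ := h
  refine ⟨Inv_peel hInv hr (hne 0), fun k => ?_⟩
  rw [← iter_succ_left]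
  exact hne (k + 1)

/-- The canonical branched-continued-fraction approximant sequence. -/
def gseq (r : ℕ) : ℕ → (ℕ → ℂ) → PowerSeries ℂ
  | 0, _ => 1
  | k + 1, c => Fs r c 0 * gseq r k (peel r c)

@[simp] lemma gseq_zero (r : ℕ) (c : ℕ → ℂ) : gseq r 0 c = 1 := rfl

lemma gseq_succ (r k : ℕ) (c : ℕ → ℂ) :
    gseq r (k + 1) c = Fs r c 0 * gseq r k (peel r c) := rfl

/-- Abstract form of condition (i). -/
def Wit (r : ℕ) (c : ℕ → ℂ) : Prop :=
  ∃ (g : ℕ → PowerSeries ℂ) (α : ℕ → ℂ),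
    (∀ k, PowerSeries.constantCoeff (g k) = 1) ∧ (∀ k, α k ≠ 0) ∧ g 0 = 1 ∧
    (∀ j, 1 ≤ j → j ≤ r → g j = Fs r c (j - 1)) ∧
    (∀ k, g (k + 1) - g k = PowerSeries.C (α k) * PowerSeries.X * g (k + r + 1))

lemma X_mul_cancel {φ ψ : PowerSeries ℂ} (h : PowerSeries.X * φ = PowerSeries.X * ψ) :
    φ = ψ := by
  ext n
  have h2 := congrArg (PowerSeries.coeff (n + 1)) h
  rwa [PowerSeries.coeff_succ_X_mul, PowerSeries.coeff_succ_X_mul] at h2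

lemma F0_sub_one {r : ℕ} {c : ℕ → ℂ} (h0 : c 0 = 1) :
    Fs r c 0 - 1 = PowerSeries.X * Fs r c r := by
  ext n
  rw [map_sub]
  cases n with
  | zero =>
      simp only [PowerSeries.coeff_zero_eq_constantCoeff, map_mul, map_one,
        PowerSeries.constantCoeff_X, zero_mul, constantCoeff_Fs, h0]
      ring
  | succ n =>
      rw [PowerSeries.coeff_succ_X_mul, PowerSeries.coeff_one, if_neg (Nat.succ_ne_zero n),
        coeff_Fs, coeff_Fs, show 0 + r * (n + 1) = r + r * n by rw [Nat.mul_add, Nat.mul_one]; omega]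
      ring

lemma coeff_one_CXmul (a : ℂ) (φ : PowerSeries ℂ) :
    PowerSeries.coeff 1 (PowerSeries.C a * (PowerSeries.X * φ)) = a * PowerSeries.constantCoeff φ := by
  rw [PowerSeries.coeff_C_mul, show (1 : ℕ) = 0 + 1 from rfl, PowerSeries.coeff_succ_X_mul,
    PowerSeries.coeff_zero_eq_constantCoeff]

lemma Wit_step {r : ℕ} {c : ℕ → ℂ} (hr : 1 ≤ r) (hInv : Inv r c) (hW : Wit r c) :
    c r ≠ 0 ∧ Wit r (peel r c) := by
  obtain ⟨g, α, hcc, hαne, hg0, hgj, hrec⟩ := hW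
  have h0 : c 0 = 1 := hInv 0 hr
  have hg1 : g 1 = Fs r c 0 := hgj 1 le_rfl hr
  have hrec0 := hrec 0
  rw [hg0, hg1] at hrec0
  -- identify α 0 = c r
  have hα0 : α 0 = c r := by
    have h2 := congrArg (PowerSeries.coeff 1) hrec0
    rw [map_sub, mul_assoc, coeff_one_CXmul, hcc (0 + r + 1), mul_one, coeff_Fs,
      PowerSeries.coeff_one, if_neg one_ne_zero, Nat.mul_one, zero_add, sub_zero] at h2
    exact h2.symm
  have hcr : c r ≠ 0 := hα0 ▸ hαne 0
  -- identify g (r + 1)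
  have hgr1 : PowerSeries.C (c r) * g (0 + r + 1) = Fs r c r := by
    have h3 : PowerSeries.X * (PowerSeries.C (c r) * g (0 + r + 1)) = PowerSeries.X * Fs r c r := by
      rw [← F0_sub_one h0, hrec0, hα0]
      ring
    exact X_mul_cancel h3
  -- the new witness
  refine ⟨hcr, fun k => (Fs r c 0)⁻¹ * g (k + 1), fun k => α (k + 1), ?_, ?_, ?_, ?_, ?_⟩
  · intro k
    beta_reduce
    rw [map_mul, PowerSeries.constantCoeff_inv, constantCoeff_Fs, h0, hcc]
    norm_num
  · intro k; exact hαne (k + 1)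
  · show (Fs r c 0)⁻¹ * g 1 = 1
    rw [hg1, mul_comm]
    exact F0_mul_inv h0
  · intro j hj1 hjr
    show (Fs r c 0)⁻¹ * g (j + 1) = Fs r (peel r c) (j - 1)
    by_cases hjr' : j = r
    · rw [hjr']
      rw [Fs_peel c (show r - 1 < r by omega), show r - 1 + 1 = r by omega]
      have h4 : g (r + 1) = PowerSeries.C (c r)⁻¹ * Fs r c r := by
        have h5 : PowerSeries.C (c r)⁻¹ * (PowerSeries.C (c r) * g (0 + r + 1)) = PowerSeries.C (c r)⁻¹ * Fs r c r := by
          rw [hgr1]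
        rw [← mul_assoc, ← map_mul, inv_mul_cancel₀ hcr, map_one, one_mul] at h5
        rw [show r + 1 = 0 + r + 1 by omega, h5]
      rw [h4, show lam r c (r - 1) = c r from if_pos rfl]
      ring
    · have hjr2 : j + 1 ≤ r := by omega
      rw [hgj (j + 1) (by omega) hjr2, Fs_peel c (show j - 1 < r by omega)]
      rw [show j - 1 + 1 = j by omega, show j + 1 - 1 = j by omega]
      rw [show lam r c (j - 1) = 1 from if_neg (by omega), inv_one, map_one, one_mul, mul_comm]
  · intro k
    show (Fs r c 0)⁻¹ * g (k + 1 + 1) - (Fs r c 0)⁻¹ * g (k + 1)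
      = PowerSeries.C (α (k + 1)) * PowerSeries.X * ((Fs r c 0)⁻¹ * g (k + r + 1 + 1))
    have h6 := hrec (k + 1)
    have h7 : (Fs r c 0)⁻¹ * g (k + 1 + 1) - (Fs r c 0)⁻¹ * g (k + 1)
        = (Fs r c 0)⁻¹ * (g (k + 1 + 1) - g (k + 1)) := by ring
    rw [h7, h6]
    rw [show k + 1 + r + 1 = k + r + 1 + 1 by omega]
    ring

lemma Wit_Good {r : ℕ} (hr : 1 ≤ r) :
    ∀ (c : ℕ → ℂ), Inv r c → Wit r c → Good r c := by
  have key : ∀ k (c : ℕ → ℂ), Inv r c → Wit r c → (iter r k c) r ≠ 0 := by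
    intro k
    induction k with
    | zero => intro c hI hW; exact (Wit_step hr hI hW).1
    | succ k ih =>
        intro c hI hW
        obtain ⟨hcr, hW'⟩ := Wit_step hr hI hW
        rw [iter_succ_left]
        exact ih (peel r c) (Inv_peel hI hr hcr) hW'
  exact fun c hI hW => ⟨hI, fun k => key k c hI hW⟩

lemma gseq_const {r : ℕ} (hr : 1 ≤ r) :
    ∀ k (c : ℕ → ℂ), Good r c → PowerSeries.constantCoeff (gseq r k c) = 1 := by
  intro k
  induction k with
  | zero => intro c _; simp
  | succ k ih =>
      intro c hG
      rw [gseq_succ, map_mul, constantCoeff_Fs, hG.1 0 hr, ih (peel r c) (Good_peel hr hG)]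
      norm_num

lemma gseq_val {r : ℕ} (hr : 1 ≤ r) :
    ∀ j (c : ℕ → ℂ), Good r c → 1 ≤ j → j ≤ r → gseq r j c = Fs r c (j - 1) := by
  intro j
  induction j with
  | zero => intro c _ h1 _; omega
  | succ j ih =>
      intro c hG h1 hjr
      rcases Nat.eq_zero_or_pos j with hj0 | hj1
      · subst hj0
        rw [gseq_succ, gseq_zero, mul_one]
      · have h0 : c 0 = 1 := hG.1 0 hr
        rw [gseq_succ, ih (peel r c) (Good_peel hr hG) hj1 (by omega)]
        rw [Fs_peel c (show j - 1 < r by omega), show j - 1 + 1 = j by omega]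
        rw [show lam r c (j - 1) = 1 from if_neg (by omega), inv_one, map_one, one_mul]
        rw [show j + 1 - 1 = j from rfl]
        calc Fs r c 0 * (Fs r c j * (Fs r c 0)⁻¹)
            = (Fs r c 0 * (Fs r c 0)⁻¹) * Fs r c j := by ring
          _ = Fs r c j := by rw [F0_mul_inv h0, one_mul]

lemma gseq_rec {r : ℕ} (hr : 1 ≤ r) :
    ∀ k (c : ℕ → ℂ), Good r c →
      gseq r (k + 1) c - gseq r k c
        = PowerSeries.C ((iter r k c) r) * PowerSeries.X * gseq r (k + r + 1) c := by
  intro k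
  induction k with
  | zero =>
      intro c hG
      have h0 : c 0 = 1 := hG.1 0 hr
      have hcr : c r ≠ 0 := hG.2 0
      rw [gseq_succ r 0 c, gseq_zero, gseq_zero, mul_one, F0_sub_one h0]
      rw [show (0:ℕ) + r + 1 = r + 1 by omega, gseq_succ r r c,
        gseq_val hr r (peel r c) (Good_peel hr hG) hr le_rfl]
      rw [Fs_peel c (show r - 1 < r by omega), show r - 1 + 1 = r by omega,
        show lam r c (r - 1) = c r from if_pos rfl, iter_zero]
      have hCinv : PowerSeries.C (c r) * PowerSeries.C (c r)⁻¹ = 1 := by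
        rw [← map_mul, mul_inv_cancel₀ hcr, map_one]
      calc PowerSeries.X * Fs r c r
          = (PowerSeries.C (c r) * PowerSeries.C (c r)⁻¹) *
              ((Fs r c 0 * (Fs r c 0)⁻¹) * (PowerSeries.X * Fs r c r)) := by
            rw [hCinv, F0_mul_inv h0, one_mul, one_mul]
        _ = PowerSeries.C (c r) * PowerSeries.X *
              (Fs r c 0 * (PowerSeries.C (c r)⁻¹ * (Fs r c r * (Fs r c 0)⁻¹))) := by
            ring
  | succ k ih =>
      intro c hG
      rw [gseq_succ r (k + 1) c, gseq_succ r k c, ← mul_sub, ih (peel r c) (Good_peel hr hG),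
        ← iter_succ_left]
      rw [show k + 1 + r + 1 = k + r + 1 + 1 by omega, gseq_succ r (k + r + 1) c]
      ring

lemma Good_Wit {r : ℕ} {c : ℕ → ℂ} (hr : 1 ≤ r) (hG : Good r c) : Wit r c := by
  refine ⟨fun k => gseq r k c, fun k => (iter r k c) r, fun k => gseq_const hr k c hG,
    fun k => hG.2 k, gseq_zero r c, fun j h1 hjr => gseq_val hr j c hG h1 hjr,
    fun k => gseq_rec hr k c hG⟩


lemma Dbase {r : ℕ} (c : ℕ → ℂ) (j : ℕ) : Dm r c j 1 = c j := by
  unfold Dm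
  rw [Matrix.det_fin_one]
  simp

/-- Abstract form of condition (ii). -/
def AllD (r : ℕ) (c : ℕ → ℂ) : Prop := ∀ j, j ≤ r → ∀ m, 1 ≤ m → Dm r c j m ≠ 0

lemma AllD_peel {r : ℕ} {c : ℕ → ℂ} (hr : 1 ≤ r) (hInv : Inv r c) (hA : AllD r c) :
    c r ≠ 0 ∧ AllD r (peel r c) := by
  have h0 : c 0 = 1 := hInv 0 hr
  have hcr : c r ≠ 0 := by
    have h := hA r le_rfl 1 le_rfl
    rwa [Dbase] at h
  refine ⟨hcr, ?_⟩
  intro j hj m hm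
  by_cases hjr : j = r
  · rw [hjr]
    obtain ⟨z, hz, heq⟩ := lemB hr h0 hcr m
    intro hcontra
    rw [hcontra, mul_zero] at heq
    exact hA 0 (by omega) (m + 1) (by omega) heq
  · obtain ⟨z, hz, heq⟩ := lemA h0 hcr (show j < r by omega) m
    intro hcontra
    rw [hcontra, mul_zero] at heq
    exact hA (j + 1) (by omega) m hm heq

lemma AllD_Good {r : ℕ} {c : ℕ → ℂ} (hr : 1 ≤ r) (hInv : Inv r c) (hA : AllD r c) :
    Good r c := by
  have key : ∀ k (c : ℕ → ℂ), Inv r c → AllD r c →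
      Inv r (iter r k c) ∧ AllD r (iter r k c) := by
    intro k
    induction k with
    | zero => exact fun c hI hA => ⟨hI, hA⟩
    | succ k ih =>
        intro c hI hA
        obtain ⟨hcr, hA'⟩ := AllD_peel hr hI hA
        rw [iter_succ_left]
        exact ih (peel r c) (Inv_peel hI hr hcr) hA'
  refine ⟨hInv, fun k => ?_⟩
  obtain ⟨hI, hA'⟩ := key k c hInv hA
  have h := hA' r le_rfl 1 le_rfl
  rwa [Dbase] at h

lemma Good_AllD {r : ℕ} {c : ℕ → ℂ} (hr : 1 ≤ r) (hG : Good r c) : AllD r c := by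
  suffices h : ∀ N (c : ℕ → ℂ) j m, Good r c → j ≤ r → 1 ≤ m → m * (r + 1) + j = N →
      Dm r c j m ≠ 0 by
    intro j hj m hm
    exact h (m * (r + 1) + j) c j m hG hj hm rfl
  intro N
  induction N using Nat.strong_induction_on with
  | _ N IH =>
    intro c j m hG hj hm hN
    have h0 : c 0 = 1 := hG.1 0 hr
    have hcr : c r ≠ 0 := hG.2 0
    rcases Nat.lt_or_ge m 2 with hm1 | hm2
    · have hm1' : m = 1 := by omega
      subst hm1'
      rw [Dbase]
      rcases Nat.lt_or_ge j r with hjr | hjr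
      · rw [hG.1 j hjr]; exact one_ne_zero
      · rw [show j = r by omega]; exact hcr
    · rcases Nat.eq_zero_or_pos j with hj0 | hj1
      · subst hj0
        obtain ⟨m', hm'⟩ : ∃ m', m = m' + 1 := ⟨m - 1, by omega⟩
        subst hm'
        obtain ⟨z, hz, heq⟩ := lemB hr h0 hcr m'
        rw [heq]
        apply mul_ne_zero hz
        have hmeas : m' * (r + 1) + r < N := by
          have hexp : (m' + 1) * (r + 1) = m' * (r + 1) + (r + 1) := by ring
          omega
        exact IH (m' * (r + 1) + r) hmeas (peel r c) r m' (Good_peel hr hG) le_rfl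
          (by omega) rfl
      · obtain ⟨j', hj'⟩ : ∃ j', j = j' + 1 := ⟨j - 1, by omega⟩
        subst hj'
        obtain ⟨z, hz, heq⟩ := lemA h0 hcr (show j' < r by omega) m
        rw [heq]
        exact mul_ne_zero hz (IH (m * (r + 1) + j') (by omega) (peel r c) j' m
          (Good_peel hr hG) (by omega) hm rfl)

theorem main_abstract {r : ℕ} {c : ℕ → ℂ} (hr : 1 ≤ r) (hInv : Inv r c) :
    Wit r c ↔ AllD r c :=
  ⟨fun hW => Good_AllD hr (Wit_Good hr c hInv hW),
   fun hA => Good_Wit hr (AllD_Good hr hInv hA)⟩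

end BCF

theorem stmt12 (r : ℕ) (hr : 1 ≤ r) (v : ℕ → LF)
    (hv : ∀ j, j < r → v j (1 : Polynomial ℂ) = 1) :
    -- (i) existence of the power series `g_k` and nonzero coefficients `α_k`
    (∃ (g : ℕ → PowerSeries ℂ) (α : ℕ → ℂ),
      (∀ k, PowerSeries.constantCoeff (g k) = 1) ∧
      (∀ k, α k ≠ 0) ∧
      g 0 = 1 ∧
      (∀ j, 1 ≤ j → j ≤ r →
        g j = PowerSeries.mk fun n => v (j - 1) (Polynomial.X ^ n)) ∧
      (∀ k, g (k + 1) - g k = PowerSeries.C (α k) * PowerSeries.X * g (k + r + 1)))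
    ↔
    -- (ii) all leading principal minors of the moment matrices of the
    -- systems `V^{[j]}`, `0 ≤ j ≤ r`, are nonzero
    (∀ j, j ≤ r → ∀ m, 1 ≤ m → Delta r (Vsys r j v) m ≠ 0) := by
  classical
  have hr0 : 0 < r := hr
  set c : ℕ → ℂ := fun mm => v (mm % r) (Polynomial.X ^ (mm / r)) with hc
  have hInv : BCF.Inv r c := by
    intro i hi
    show v (i % r) (Polynomial.X ^ (i / r)) = 1
    rw [Nat.mod_eq_of_lt hi, Nat.div_eq_of_lt hi, pow_zero]
    exact hv i hi
  have hentry : ∀ j, j ≤ r → ∀ n ℓ : ℕ,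
      momentMatrix r (Vsys r j v) n ℓ = c (j + ℓ + r * n) := by
    intro j hj n ℓ
    have hld := Nat.mod_add_div ℓ r
    have hlm : ℓ % r < r := Nat.mod_lt _ hr0
    unfold momentMatrix Vsys
    by_cases h : j + ℓ % r < r
    · rw [if_pos h]
      have hmod : (j + ℓ + r * n) % r = j + ℓ % r := by
        rw [show j + ℓ + r * n = j + ℓ % r + r * (ℓ / r + n) by rw [Nat.mul_add]; omega,
          Nat.add_mul_mod_self_left, Nat.mod_eq_of_lt h]
      have hdiv : (j + ℓ + r * n) / r = ℓ / r + n := by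
        rw [show j + ℓ + r * n = j + ℓ % r + r * (ℓ / r + n) by rw [Nat.mul_add]; omega,
          Nat.add_mul_div_left _ _ hr0, Nat.div_eq_of_lt h, zero_add]
      show v (j + ℓ % r) (Polynomial.X ^ (ℓ / r + n))
        = v ((j + ℓ + r * n) % r) (Polynomial.X ^ ((j + ℓ + r * n) / r))
      rw [hmod, hdiv]
    · rw [if_neg h]
      have hms : j + ℓ % r - r < r := by omega
      have hmod : (j + ℓ + r * n) % r = j + ℓ % r - r := by
        rw [show j + ℓ + r * n = (j + ℓ % r - r) + r * (ℓ / r + n + 1) by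
          rw [Nat.mul_add, Nat.mul_add, Nat.mul_one]; omega,
          Nat.add_mul_mod_self_left, Nat.mod_eq_of_lt hms]
      have hdiv : (j + ℓ + r * n) / r = ℓ / r + n + 1 := by
        rw [show j + ℓ + r * n = (j + ℓ % r - r) + r * (ℓ / r + n + 1) by
          rw [Nat.mul_add, Nat.mul_add, Nat.mul_one]; omega,
          Nat.add_mul_div_left _ _ hr0, Nat.div_eq_of_lt hms, zero_add]
      show xMul (v (j + ℓ % r - r)) (Polynomial.X ^ (ℓ / r + n))
        = v ((j + ℓ + r * n) % r) (Polynomial.X ^ ((j + ℓ + r * n) / r))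
      rw [hmod, hdiv]
      show v (j + ℓ % r - r) (Polynomial.X * Polynomial.X ^ (ℓ / r + n))
        = v (j + ℓ % r - r) (Polynomial.X ^ (ℓ / r + n + 1))
      rw [← pow_succ']
  have hDelta : ∀ j, j ≤ r → ∀ m : ℕ, Delta r (Vsys r j v) m = BCF.Dm r c j m := by
    intro j hj m
    unfold Delta BCF.Dm
    congr 1
    ext n ℓ
    simp only [Matrix.of_apply]
    exact hentry j hj n ℓ
  have hmk : ∀ j : ℕ, 1 ≤ j → j ≤ r →
      (PowerSeries.mk fun n => v (j - 1) (Polynomial.X ^ n)) = BCF.Fs r c (j - 1) := by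
    intro j h1 hjr
    ext n
    rw [PowerSeries.coeff_mk, BCF.coeff_Fs]
    show v (j - 1) (Polynomial.X ^ n)
      = v ((j - 1 + r * n) % r) (Polynomial.X ^ ((j - 1 + r * n) / r))
    rw [Nat.add_mul_mod_self_left, Nat.mod_eq_of_lt (by omega), Nat.add_mul_div_left _ _ hr0,
      Nat.div_eq_of_lt (by omega), zero_add]
  constructor
  · rintro ⟨g, α, h1, h2, h3, h4, h5⟩
    have hW : BCF.Wit r c := ⟨g, α, h1, h2, h3,
      fun j hj1 hjr => by rw [h4 j hj1 hjr, hmk j hj1 hjr], h5⟩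
    have hA := (BCF.main_abstract hr hInv).1 hW
    intro j hj m hm
    rw [hDelta j hj m]
    exact hA j hj m hm
  · intro h
    have hA : BCF.AllD r c := by
      intro j hj m hm
      have h2 := h j hj m hm
      rwa [hDelta j hj m] at h2
    obtain ⟨g, α, h1, h2, h3, h4, h5⟩ := (BCF.main_abstract hr hInv).2 hA
    exact ⟨g, α, h1, h2, h3,
      fun j hj1 hjr => by rw [h4 j hj1 hjr, hmk j hj1 hjr], h5⟩
end
end

section
/- Fix r ≥ 1 and let (v_1,…,v_r) be a system of linear functionals on ℂ[x] with ⟨v_j, 1⟩ = 1 for all j, admitting a sequence of formal power series (g_k)_{k∈ℕ} with constant coefficient 1 and a sequence (α_k)_{k∈ℕ} of nonzero complex numbers such that g_0 = 1, g_j = Σ_{n≥0}⟨v_j, x^n⟩t^n for 1 ≤ j ≤ r, and g_{k+1} − g_k = α_k t g_{k+r+1} for all k. Let (P_n)_{n∈ℕ} be the polynomial sequence defined by P_j(x) = x^j for 0 ≤ j ≤ r and P_{n+r+1}(x) = x P_{n+r}(x) − α_n P_n(x) for all n ∈ ℕ. Then for every n ∈ ℕ and 0 ≤ j ≤ r there exists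 a polynomial P^{[j]}_n with P_{(r+1)n+j}(x) = x^j · P^{[j]}_n(x^{r+1}), and for each 0 ≤ j ≤ r the sequence (P^{[j]}_n)_{n∈ℕ} is r-orthogonal with respect to the system V^{[j]} := (v_{j+1},…,v_r, x·v_1,…,x·v_j). -/
open Polynomial Finset

noncomputable section

/-- `Q` is `r`-orthogonal with respect to the system `w` (0-indexed:
`⟨w_j, x^k Q_n⟩ = 0` whenever `n ≥ rk+j` and `≠ 0` whenever `n = rk+j−1`,
paper-`j` 1-indexed). -/
def rOrth (r : ℕ) (w : ℕ → LF) (Q : ℕ → Polynomial ℂ) : Prop :=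
  (∀ n, (Q n).Monic ∧ (Q n).natDegree = n) ∧
  ∀ k j n, j < r →
    (r * k + j < n → w j (Polynomial.X ^ k * Q n) = 0) ∧
    (r * k + j = n → w j (Polynomial.X ^ k * Q n) ≠ 0)

namespace S13

/-- pairing of a moment table `M` (extended by 0 on negative indices) against a polynomial,
with integer shift `s`. -/
def Tm (M : ℕ → ℤ → ℂ) (c : ℕ) (s : ℤ) (p : Polynomial ℂ) : ℂ :=
  p.sum fun m a => a * M c ((m : ℤ) + s)

lemma Tm_add (M : ℕ → ℤ → ℂ) (c : ℕ) (s : ℤ) (p q : Polynomial ℂ) :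
    Tm M c s (p + q) = Tm M c s p + Tm M c s q :=
  Polynomial.sum_add_index p q _ (fun _ => zero_mul _) (fun _ _ _ => add_mul _ _ _)

lemma Tm_monomial (M : ℕ → ℤ → ℂ) (c : ℕ) (s : ℤ) (m : ℕ) (a : ℂ) :
    Tm M c s (monomial m a) = a * M c ((m : ℤ) + s) :=
  Polynomial.sum_monomial_index a _ (zero_mul _)

lemma Tm_C_mul (M : ℕ → ℤ → ℂ) (c : ℕ) (s : ℤ) (a : ℂ) (p : Polynomial ℂ) :
    Tm M c s (C a * p) = a * Tm M c s p := by
  rw [← Polynomial.smul_eq_C_mul]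
  rw [Tm, Polynomial.sum_smul_index p a (fun m b => b * M c ((m : ℤ) + s)) (fun _ => zero_mul _)]
  rw [Tm, Polynomial.sum_def, Polynomial.sum_def, Finset.mul_sum]
  exact Finset.sum_congr rfl fun m _ => by ring

lemma Tm_sub (M : ℕ → ℤ → ℂ) (c : ℕ) (s : ℤ) (a : ℂ) (p q : Polynomial ℂ) :
    Tm M c s (p - C a * q) = Tm M c s p - a * Tm M c s q := by
  have h : p - C a * q = p + C (-a) * q := by rw [map_neg]; ring
  rw [h, Tm_add, Tm_C_mul]; ring

lemma Tm_X_mul (M : ℕ → ℤ → ℂ) (c : ℕ) (s : ℤ) (p : Polynomial ℂ) :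
    Tm M c s (X * p) = Tm M c (s + 1) p := by
  induction p using Polynomial.induction_on' with
  | add p q hp hq => rw [mul_add, Tm_add, Tm_add, hp, hq]
  | monomial m a =>
      have h : (X : Polynomial ℂ) * monomial m a = monomial (m + 1) a := by
        rw [← C_mul_X_pow_eq_monomial, ← C_mul_X_pow_eq_monomial]; ring
      rw [h, Tm_monomial, Tm_monomial]
      congr 1
      push_cast
      ring

lemma Tm_one (M : ℕ → ℤ → ℂ) (c : ℕ) (s : ℤ) :
    Tm M c s 1 = M c s := by
  have h : (1 : Polynomial ℂ) = monomial 0 1 := by simp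
  rw [h, Tm_monomial]; simp

lemma Tm_rec (r : ℕ) (α : ℕ → ℂ) (M : ℕ → ℤ → ℂ)
    (hrec : ∀ c z, M (c+1) z = M c z + α c * M (c+r+1) (z-1))
    (c : ℕ) (s : ℤ) (p : Polynomial ℂ) :
    Tm M (c+1) s p = Tm M c s p + α c * Tm M (c+r+1) (s-1) p := by
  rw [Tm, Tm, Tm, Polynomial.sum_def, Polynomial.sum_def, Polynomial.sum_def, Finset.mul_sum,
    ← Finset.sum_add_distrib]
  refine Finset.sum_congr rfl fun m _ => ?_
  have h1 : (m:ℤ) + (s - 1) = ((m:ℤ) + s) - 1 := by ring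
  rw [h1, hrec c ((m:ℤ)+s)]
  ring

lemma Tm_c0 (M : ℕ → ℤ → ℂ) (hz0 : ∀ z, 1 ≤ z → M 0 z = 0) (s : ℤ) (hs : 1 ≤ s)
    (p : Polynomial ℂ) : Tm M 0 s p = 0 := by
  rw [Tm, Polynomial.sum_def]
  apply Finset.sum_eq_zero
  intro m _
  rw [hz0 ((m:ℤ)+s) (by omega), mul_zero]

lemma Tm_lead (M : ℕ → ℤ → ℂ) (hneg : ∀ c z, z < 0 → M c z = 0) (h0 : ∀ c, M c 0 = 1)
    (c : ℕ) (s : ℤ) (p : Polynomial ℂ) (n : ℕ) (hm : p.Monic) (hd : p.natDegree = n)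
    (hns : (n:ℤ) + s = 0) :
    Tm M c s p = 1 := by
  rw [Tm, Polynomial.sum_def]
  rw [Finset.sum_eq_single n]
  · rw [← hd, hm.coeff_natDegree, hd, one_mul, hns, h0]
  · intro m hmem hne
    have hle : m ≤ n := hd ▸ Polynomial.le_natDegree_of_mem_supp m hmem
    have hlt : (m:ℤ) + s < 0 := by omega
    rw [hneg c _ hlt, mul_zero]
  · intro hns'
    exfalso
    apply hns'
    rw [Polynomial.mem_support_iff, ← hd, hm.coeff_natDegree]
    exact one_ne_zero

/-- pairing a functional with matching moments against `X^k * p`. -/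
lemma apply_eq_Tm (M : ℕ → ℤ → ℂ) (u : LF) (c : ℕ)
    (hmom : ∀ m : ℕ, u (X ^ m) = M c (m : ℤ)) (k : ℕ) (p : Polynomial ℂ) :
    u (X ^ k * p) = Tm M c (k : ℤ) p := by
  induction p using Polynomial.induction_on' with
  | add p q hp hq => rw [mul_add, map_add, hp, hq, Tm_add]
  | monomial m a =>
      have h1 : (X : Polynomial ℂ) ^ k * monomial m a = monomial (m + k) a := by
        rw [← C_mul_X_pow_eq_monomial, ← C_mul_X_pow_eq_monomial, pow_add]; ring
      rw [h1, Tm_monomial, ← C_mul_X_pow_eq_monomial, ← Polynomial.smul_eq_C_mul, map_smul,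
        hmom (m + k)]
      push_cast
      rw [smul_eq_mul]

/-- row recursion: given row `n` (`prev`), produce row `n+1`. -/
def qrow (r : ℕ) (α : ℕ → ℂ) (n : ℕ) (prev : ℕ → Polynomial ℂ) : ℕ → Polynomial ℂ
  | 0 => X * prev r - C (α ((r + 1) * n)) * prev 0
  | j + 1 => qrow r α n prev j - C (α ((r + 1) * n + (j + 1))) * prev (j + 1)

/-- the component polynomials: `Qp r α n j = Q^{[j]}_n`. -/
def Qp (r : ℕ) (α : ℕ → ℂ) : ℕ → ℕ → Polynomial ℂ
  | 0 => fun _ => (1 : Polynomial ℂ)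
  | n + 1 => qrow r α n (Qp r α n)

lemma Qp_zero (r : ℕ) (α : ℕ → ℂ) (j : ℕ) : Qp r α 0 j = 1 := rfl

lemma Qp_succ_zero (r : ℕ) (α : ℕ → ℂ) (n : ℕ) :
    Qp r α (n + 1) 0 = X * Qp r α n r - C (α ((r + 1) * n)) * Qp r α n 0 := rfl

lemma Qp_succ_succ (r : ℕ) (α : ℕ → ℂ) (n j : ℕ) :
    Qp r α (n + 1) (j + 1)
      = Qp r α (n + 1) j - C (α ((r + 1) * n + (j + 1))) * Qp r α n (j + 1) := rfl

/-- helper: subtracting a lower-degree poly keeps monicity and degree. -/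
lemma monic_sub_helper (p q : Polynomial ℂ) (a : ℂ) (n : ℕ)
    (hp : p.Monic) (hdp : p.natDegree = n + 1) (hq : q.natDegree ≤ n) :
    (p - C a * q).Monic ∧ (p - C a * q).natDegree = n + 1 := by
  have hplt : p.degree = ((n + 1 : ℕ) : WithBot ℕ) := by
    rw [Polynomial.degree_eq_natDegree hp.ne_zero, hdp]
  have hqlt : (C a * q).degree < p.degree := by
    calc (C a * q).degree ≤ (C a).degree + q.degree := Polynomial.degree_mul_le _ _
      _ ≤ 0 + q.degree := by gcongr; exact Polynomial.degree_C_le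
      _ = q.degree := by rw [zero_add]
      _ ≤ (q.natDegree : WithBot ℕ) := Polynomial.degree_le_natDegree
      _ ≤ (n : WithBot ℕ) := by exact_mod_cast hq
      _ < p.degree := by rw [hplt]; exact_mod_cast Nat.lt_succ_self n
  have hdeg : (p - C a * q).degree = p.degree := Polynomial.degree_sub_eq_left_of_degree_lt hqlt
  have hnd : (p - C a * q).natDegree = n + 1 := by
    rw [Polynomial.natDegree_eq_of_degree_eq hdeg, hdp]
  refine ⟨?_, hnd⟩
  have hcoeff : (p - C a * q).coeff (n + 1) = 1 := by
    rw [Polynomial.coeff_sub, Polynomial.coeff_C_mul,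
      Polynomial.coeff_eq_zero_of_natDegree_lt (lt_of_le_of_lt hq (Nat.lt_succ_self n)),
      mul_zero, sub_zero, ← hdp]
    exact hp.coeff_natDegree
  rw [Polynomial.Monic, Polynomial.leadingCoeff, hnd, hcoeff]

lemma Qp_monic (r : ℕ) (α : ℕ → ℂ) :
    ∀ n j, (Qp r α n j).Monic ∧ (Qp r α n j).natDegree = n := by
  intro n
  induction n with
  | zero => intro j; rw [Qp_zero]; exact ⟨monic_one, natDegree_one⟩
  | succ n ih =>
      intro j
      induction j with
      | zero =>
          rw [Qp_succ_zero]
          refine monic_sub_helper _ _ _ n ?_ ?_ (le_of_eq (ih 0).2)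
          · exact (monic_X).mul (ih r).1
          · rw [Polynomial.natDegree_mul Polynomial.X_ne_zero (ih r).1.ne_zero,
              Polynomial.natDegree_X, (ih r).2, add_comm]
      | succ j ihj =>
          rw [Qp_succ_succ]
          exact monic_sub_helper _ _ _ n ihj.1 ihj.2 (le_of_eq (ih (j+1)).2)

/-- relation with the big family `P`. -/
lemma P_eq_Qp (r : ℕ) (α : ℕ → ℂ) (P : ℕ → Polynomial ℂ)
    (hPinit : ∀ j, j ≤ r → P j = X ^ j)
    (hPrec : ∀ n, P (n + r + 1) = X * P (n + r) - C (α n) * P n) :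
    ∀ n, ∀ j, j ≤ r → P ((r + 1) * n + j) = X ^ j * (Qp r α n j).comp (X ^ (r + 1)) := by
  intro n
  induction n with
  | zero => intro j hj; simp [hPinit j hj, Qp_zero]
  | succ n ih =>
      intro j hj
      induction j with
      | zero =>
          have hidx : (r + 1) * (n + 1) + 0 = ((r + 1) * n) + r + 1 := by ring
          rw [hidx, hPrec ((r + 1) * n)]
          rw [ih r le_rfl, show (r+1) * n = (r+1) * n + 0 from (add_zero _).symm,
            ih 0 (Nat.zero_le r)]
          rw [Qp_succ_zero]
          rw [Polynomial.sub_comp, Polynomial.mul_comp, Polynomial.mul_comp,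
            Polynomial.X_comp, Polynomial.C_comp]
          simp only [pow_zero, one_mul, add_zero, pow_succ]
          ring
      | succ j ihj =>
          have hjr : j + 1 ≤ r := hj
          have hidx : (r + 1) * (n + 1) + (j + 1) = ((r + 1) * n + (j + 1)) + r + 1 := by ring
          rw [hidx, hPrec ((r + 1) * n + (j + 1))]
          have hidx2 : (r + 1) * n + (j + 1) + r = (r + 1) * (n + 1) + j := by ring
          rw [hidx2, ihj (Nat.le_of_succ_le hj), ih (j+1) hjr]
          rw [Qp_succ_succ]
          rw [Polynomial.sub_comp, Polynomial.mul_comp, Polynomial.C_comp]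
          rw [pow_succ]
          ring

theorem master (r : ℕ) (α : ℕ → ℂ) (M : ℕ → ℤ → ℂ) (hr : 1 ≤ r)
    (h0 : ∀ c, M c 0 = 1) (hneg : ∀ c z, z < 0 → M c z = 0)
    (hz0 : ∀ z, 1 ≤ z → M 0 z = 0)
    (hrec : ∀ c z, M (c+1) z = M c z + α c * M (c+r+1) (z-1)) :
    ∀ F : ℕ,
    (∀ (c : ℕ) (s : ℤ) (j n : ℕ), 1 ≤ c → j ≤ r →
      (4*r+4)*n + 2*(((n:ℤ)+s).toNat) + 2*j ≤ F →
      1 ≤ (r:ℤ)*s + c - j → 1 - s ≤ (r:ℤ)*s + c - j → (r:ℤ)*s + c - j ≤ n →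
      Tm M c s (Qp r α n j) = 0) ∧
    (∀ (c : ℕ) (s : ℤ) (j n : ℕ), 1 ≤ c → j ≤ r →
      (4*r+4)*n + 2*(((n:ℤ)+s).toNat) + 2*j + 1 ≤ F →
      (r:ℤ)*s + c - j = n + 1 → 0 ≤ (n:ℤ) + s →
      Tm M c s (Qp r α n j) =
        ∏ i ∈ Finset.range (((n:ℤ)+s).toNat), α (c - 1 + r*i)) := by
  intro F
  induction F using Nat.strong_induction_on with
  | _ F IH =>
  constructor
  · -- Z part
    intro c s j n hc hj hF hlo1 hlo2 hhi
    obtain ⟨n', rfl⟩ : ∃ n', n = n' + 1 := ⟨n - 1, by omega⟩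
    have em : (4*r+4)*(n'+1) = (4*r+4)*n' + (4*r+4) := by ring
    have hF1 : 1 ≤ F := by omega
    cases j with
    | zero =>
        rw [Qp_succ_zero, Tm_sub, Tm_X_mul]
        have er1 : (r:ℤ)*(s+1) = r*s + r := by ring
        have hTeq : (((n':ℤ)+(s+1)).toNat) = (((n'+1:ℕ):ℤ)+s).toNat := by
          push_cast; omega
        rcases lt_or_eq_of_le hhi with hb | hb
        · have hA := (IH (F-1) (by omega)).1 c (s+1) r n' hc le_rfl
            (by rw [hTeq]; omega) (by omega) (by omega) (by push_cast at hb ⊢; omega)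
          have hB := (IH (F-1) (by omega)).1 c s 0 n' hc (Nat.zero_le r)
            (by push_cast at hF ⊢; omega) (by omega) (by omega) (by push_cast at hb ⊢; omega)
          rw [hA, hB, mul_zero, sub_zero]
        · have hb' : (r:ℤ)*s + c - 0 = (n':ℤ) + 1 := by push_cast at hb ⊢; omega
          have hA := (IH (F-1) (by omega)).2 c (s+1) r n' hc le_rfl
            (by rw [hTeq]; omega) (by omega) (by omega)
          have hB := (IH (F-1) (by omega)).2 c s 0 n' hc (Nat.zero_le r)
            (by push_cast at hF ⊢; omega) (by push_cast; omega) (by omega)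
          rw [hA, hB]
          have hK1 : (((n':ℤ)+(s+1)).toNat) = (((n':ℤ)+s).toNat) + 1 := by omega
          rw [hK1, Finset.prod_range_succ]
          have hKz : ((((n':ℤ)+s).toNat : ℕ) : ℤ) = (n':ℤ) + s := by omega
          have hidx : c - 1 + r * (((n':ℤ)+s).toNat) = (r+1)*n' := by
            zify [hc]
            rw [hKz]
            linear_combination hb'
          rw [hidx]
          ring
    | succ j' =>
        rw [Qp_succ_succ, Tm_sub]
        rcases lt_or_eq_of_le hhi with hb | hb
        · have hA := (IH (F-1) (by omega)).1 c s j' (n'+1) hc (by omega)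
            (by omega) (by push_cast at hlo1 ⊢; omega) (by push_cast at hlo2 ⊢; omega)
            (by push_cast at hb ⊢; omega)
          have hB := (IH (F-1) (by omega)).1 c s (j'+1) n' hc hj
            (by push_cast at hF ⊢; omega) (by omega) (by omega) (by push_cast at hb ⊢; omega)
          rw [hA, hB, mul_zero, sub_zero]
        · have hb' : (r:ℤ)*s + c - (j'+1) = (n':ℤ) + 1 := by push_cast at hb ⊢; omega
          have hA := (IH (F-1) (by omega)).2 c s j' (n'+1) hc (by omega)
            (by omega) (by push_cast at hb' ⊢; omega) (by push_cast at hlo2 hb' ⊢; omega)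
          have hB := (IH (F-1) (by omega)).2 c s (j'+1) n' hc hj
            (by push_cast at hF ⊢; omega) (by push_cast at hb' ⊢; omega)
            (by push_cast at hlo2 hb' ⊢; omega)
          rw [hA, hB]
          have hK1 : ((((n'+1:ℕ):ℤ)+s).toNat) = (((n':ℤ)+s).toNat) + 1 := by
            push_cast at hlo2 hb' ⊢; omega
          rw [hK1, Finset.prod_range_succ]
          have hKz : ((((n':ℤ)+s).toNat : ℕ) : ℤ) = (n':ℤ) + s := by
            push_cast at hlo2 hb' ⊢; omega
          have hidx : c - 1 + r * (((n':ℤ)+s).toNat) = (r+1)*n' + (j'+1) := by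
            zify [hc]
            rw [hKz]
            push_cast at hb' ⊢
            linear_combination hb'
          rw [hidx]
          ring
  · -- V part
    intro c s j n hc hj hF heq hns
    rcases Nat.eq_zero_or_pos n with hn0 | hnpos
    · subst hn0
      rw [Qp_zero, Tm_one]
      have hs0 : 0 ≤ s := by push_cast at hns; omega
      rcases lt_or_eq_of_le hs0 with hs1 | hs1
      · have hs1' : 1 ≤ s := hs1
        have hseq : s = 1 := by
          by_contra hne
          have hs2 : 2 ≤ s := by omega
          have h2r : (r:ℤ)*2 ≤ r*s := mul_le_mul_of_nonneg_left hs2 (by positivity)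
          push_cast at heq
          omega
        subst hseq
        have hc1 : c = 1 := by push_cast at heq; omega
        subst hc1
        rw [show ((((0:ℕ):ℤ)) + 1).toNat = 1 by norm_num, Finset.prod_range_one]
        have h11 : M 1 1 = α 0 := by
          have h := hrec 0 1
          norm_num at h
          simp [hz0 1 le_rfl, h0] at h
          exact h
        simpa using h11
      · rw [← hs1, h0]
        rw [show ((((0:ℕ):ℤ)) + 0).toNat = 0 by norm_num, Finset.prod_range_zero]
    · rcases eq_or_lt_of_le hns with hns0 | hns1
      · rw [Tm_lead M hneg h0 c s _ n (Qp_monic r α n j).1 (Qp_monic r α n j).2 hns0.symm]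
        have hT0 : (((n:ℤ)+s).toNat) = 0 := by omega
        rw [hT0, Finset.prod_range_zero]
      · obtain ⟨c'', rfl⟩ : ∃ c'', c = c'' + 1 := ⟨c - 1, by omega⟩
        rw [Tm_rec r α M hrec c'' s (Qp r α n j)]
        have hfirst : Tm M c'' s (Qp r α n j) = 0 := by
          rcases Nat.eq_zero_or_pos c'' with hc0 | hcpos
          · subst hc0
            apply Tm_c0 M hz0
            by_contra hcon
            push_neg at hcon
            have hns' : (r:ℤ)*s ≤ 0 := by
              simpa using mul_le_mul_of_nonneg_left (show s ≤ 0 by omega)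
                (show (0:ℤ) ≤ r by positivity)
            push_cast at heq
            omega
          · exact (IH (F-1) (by omega)).1 c'' s j n hcpos hj
              (by omega) (by push_cast at heq ⊢; omega) (by push_cast at heq ⊢; omega)
              (by push_cast at heq ⊢; omega)
        have er2 : (r:ℤ)*(s-1) = r*s - r := by ring
        have hsecond := (IH (F-1) (by omega)).2 (c''+r+1) (s-1) j n (by omega) hj
          (by omega) (by push_cast at heq ⊢; omega) (by omega)
        rw [hfirst, hsecond, zero_add]
        have hK1 : (((n:ℤ)+s).toNat) = (((n:ℤ)+(s-1)).toNat) + 1 := by omega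
        rw [hK1, Finset.prod_range_succ']
        have e1 : (c''+1) - 1 + r*0 = c'' := by simp
        rw [e1]
        rw [show (∏ i ∈ Finset.range (((n:ℤ)+(s-1)).toNat), α ((c''+1) - 1 + r*(i+1)))
            = ∏ i ∈ Finset.range (((n:ℤ)+(s-1)).toNat), α ((c''+r+1) - 1 + r*i) from
          Finset.prod_congr rfl fun i _ => by
            congr 1
            rw [Nat.add_sub_cancel, Nat.add_sub_cancel, Nat.mul_succ]
            ring]
        exact mul_comm _ _

end S13
theorem stmt13 (r : ℕ) (hr : 1 ≤ r) (v : ℕ → LF)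
    (hv : ∀ j, j < r → v j (1 : Polynomial ℂ) = 1)
    (g : ℕ → PowerSeries ℂ) (α : ℕ → ℂ)
    (hgc : ∀ k, PowerSeries.constantCoeff (g k) = 1)
    (hα : ∀ k, α k ≠ 0)
    (hg0 : g 0 = 1)
    (hgj : ∀ j, 1 ≤ j → j ≤ r →
      g j = PowerSeries.mk fun n => v (j - 1) (Polynomial.X ^ n))
    (hrec : ∀ k, g (k + 1) - g k = PowerSeries.C (α k) * PowerSeries.X * g (k + r + 1))
    (P : ℕ → Polynomial ℂ)
    (hPinit : ∀ j, j ≤ r → P j = Polynomial.X ^ j)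
    (hPrec : ∀ n, P (n + r + 1)
      = Polynomial.X * P (n + r) - Polynomial.C (α n) * P n) :
    ∀ j, j ≤ r → ∃ Q : ℕ → Polynomial ℂ,
      (∀ n, P ((r + 1) * n + j)
        = Polynomial.X ^ j * (Q n).comp (Polynomial.X ^ (r + 1))) ∧
      rOrth r (Vsys r j v) Q := by
  intro j hj
  -- the moment table
  set M : ℕ → ℤ → ℂ :=
    fun c z => if 0 ≤ z then PowerSeries.coeff z.toNat (g c) else 0 with hMdef
  have h0 : ∀ c, M c 0 = 1 := by
    intro c; simp [hMdef, PowerSeries.coeff_zero_eq_constantCoeff, hgc c]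
  have hneg : ∀ c z, z < 0 → M c z = 0 := by
    intro c z hz; simp [hMdef, not_le.mpr hz]
  have hz0 : ∀ z, 1 ≤ z → M 0 z = 0 := by
    intro z hz
    have h1 : (0:ℤ) ≤ z := by omega
    simp only [hMdef, if_pos h1, hg0]
    rw [PowerSeries.coeff_one]
    simp only [ite_eq_right_iff]
    intro h
    omega
  have hrecM : ∀ c z, M (c+1) z = M c z + α c * M (c+r+1) (z-1) := by
    intro c z
    rcases lt_trichotomy z 0 with hz | hz | hz
    · have hz1 : z - 1 < 0 := by omega
      simp [hMdef, not_le.mpr hz, not_le.mpr hz1]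
      intro h; omega
    · subst hz
      have e1 : ¬ ((0:ℤ) ≤ (0:ℤ)-1) := by omega
      simp [hMdef, e1, PowerSeries.coeff_zero_eq_constantCoeff_apply, hgc]
    · have h1 : (0:ℤ) ≤ z := le_of_lt hz
      have h2 : (0:ℤ) ≤ z - 1 := by omega
      simp only [hMdef, if_pos h1, if_pos h2]
      obtain ⟨k, rfl⟩ : ∃ k : ℕ, z = (k : ℤ) + 1 := ⟨(z-1).toNat, by omega⟩
      have h3 : ((k:ℤ) + 1).toNat = k + 1 := by omega
      have h4 : ((k:ℤ) + 1 - 1).toNat = k := by omega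
      rw [h3, h4]
      have hc := congrArg (PowerSeries.coeff (k+1)) (hrec c)
      rw [map_sub, mul_assoc, PowerSeries.coeff_C_mul, PowerSeries.coeff_succ_X_mul] at hc
      linear_combination hc
  have hmom : ∀ jj, jj < r → ∀ m : ℕ, v jj (Polynomial.X ^ m) = M (jj+1) (m : ℤ) := by
    intro jj hjj m
    have hgm : g (jj+1) = PowerSeries.mk fun n => v ((jj+1) - 1) (Polynomial.X ^ n) :=
      hgj (jj+1) (by omega) (by omega)
    have hMc : M (jj+1) (m:ℤ) = PowerSeries.coeff m (g (jj+1)) := by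
      have h1 : (0:ℤ) ≤ (m:ℤ) := by positivity
      simp [hMdef, if_pos h1]
    rw [hMc, hgm, PowerSeries.coeff_mk]
    simp
  refine ⟨fun n => S13.Qp r α n j, fun n => S13.P_eq_Qp r α P hPinit hPrec n j hj,
    fun n => S13.Qp_monic r α n j, ?_⟩
  intro k i n hi
  have hrk : (0:ℤ) ≤ (r:ℤ)*(k:ℤ) := by positivity
  constructor
  · -- vanishing
    intro hlt
    have hlt' : (r:ℤ)*(k:ℤ) + (i:ℤ) < (n:ℤ) := by exact_mod_cast hlt
    simp only [Vsys]
    by_cases hcase : j + i < r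
    · rw [if_pos hcase,
        S13.apply_eq_Tm M (v (j+i)) (j+i+1) (hmom (j+i) hcase) k (S13.Qp r α n j)]
      exact (S13.master r α M hr h0 hneg hz0 hrecM
          ((4*r+4)*n + 2*(((n:ℤ)+(k:ℤ)).toNat) + 2*j)).1
        (j+i+1) (k:ℤ) j n (by omega) hj le_rfl
        (by push_cast; omega) (by push_cast; omega) (by push_cast; omega)
    · rw [if_neg hcase]
      have hge : r ≤ j + i := by omega
      have hidx : j + i - r < r := by omega
      have hx : xMul (v (j+i-r)) (Polynomial.X ^ k * (S13.Qp r α n j))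
          = v (j+i-r) (Polynomial.X ^ (k+1) * (S13.Qp r α n j)) := by
        simp only [xMul, LinearMap.comp_apply, LinearMap.mulLeft_apply]
        congr 1
        rw [← mul_assoc, ← pow_succ']
      rw [hx, S13.apply_eq_Tm M (v (j+i-r)) ((j+i-r)+1) (hmom (j+i-r) hidx) (k+1)
        (S13.Qp r α n j)]
      have hsub : ((j+i-r : ℕ):ℤ) = (j:ℤ)+(i:ℤ)-(r:ℤ) := by omega
      have er : (r:ℤ)*(((k+1:ℕ)):ℤ) = (r:ℤ)*(k:ℤ) + r := by push_cast; ring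
      exact (S13.master r α M hr h0 hneg hz0 hrecM
          ((4*r+4)*n + 2*(((n:ℤ)+((k+1:ℕ):ℤ)).toNat) + 2*j)).1
        ((j+i-r)+1) ((k+1:ℕ):ℤ) j n (by omega) hj le_rfl
        (by push_cast at er hsub ⊢; omega) (by push_cast at er hsub ⊢; omega)
        (by push_cast at er hsub ⊢; omega)
  · -- nonvanishing
    intro heqn
    have heqn' : (r:ℤ)*(k:ℤ) + (i:ℤ) = (n:ℤ) := by exact_mod_cast heqn
    simp only [Vsys]
    by_cases hcase : j + i < r
    · rw [if_pos hcase,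
        S13.apply_eq_Tm M (v (j+i)) (j+i+1) (hmom (j+i) hcase) k (S13.Qp r α n j)]
      rw [(S13.master r α M hr h0 hneg hz0 hrecM
          ((4*r+4)*n + 2*(((n:ℤ)+(k:ℤ)).toNat) + 2*j + 1)).2
        (j+i+1) (k:ℤ) j n (by omega) hj le_rfl
        (by push_cast; omega) (by push_cast; omega)]
      exact Finset.prod_ne_zero_iff.mpr fun _ _ => hα _
    · rw [if_neg hcase]
      have hge : r ≤ j + i := by omega
      have hidx : j + i - r < r := by omega
      have hx : xMul (v (j+i-r)) (Polynomial.X ^ k * (S13.Qp r α n j))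
          = v (j+i-r) (Polynomial.X ^ (k+1) * (S13.Qp r α n j)) := by
        simp only [xMul, LinearMap.comp_apply, LinearMap.mulLeft_apply]
        congr 1
        rw [← mul_assoc, ← pow_succ']
      rw [hx, S13.apply_eq_Tm M (v (j+i-r)) ((j+i-r)+1) (hmom (j+i-r) hidx) (k+1)
        (S13.Qp r α n j)]
      have hsub : ((j+i-r : ℕ):ℤ) = (j:ℤ)+(i:ℤ)-(r:ℤ) := by omega
      have er : (r:ℤ)*(((k+1:ℕ)):ℤ) = (r:ℤ)*(k:ℤ) + r := by push_cast; ring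
      rw [(S13.master r α M hr h0 hneg hz0 hrecM
          ((4*r+4)*n + 2*(((n:ℤ)+((k+1:ℕ):ℤ)).toNat) + 2*j + 1)).2
        ((j+i-r)+1) ((k+1:ℕ):ℤ) j n (by omega) hj le_rfl
        (by push_cast at er hsub ⊢; omega) (by push_cast at er hsub ⊢; omega)]
      exact Finset.prod_ne_zero_iff.mpr fun _ _ => hα _
end
end

section
/- Fix r ≥ 1 and real parameters a_1,…,a_r such that a_i − a_j ∉ ℤ for i ≠ j and no a_j is a negative integer. Let (v_1,…,v_r) be the linear functionals on ℂ[x] with moments ⟨v_j, x^n⟩ = (a_j+1)_n (the normalised multiple Laguerre system of the first kind). Define a*_0 := −1 and a*_{rn+j} := a_j + n for n ∈ ℕ and 1 ≤ j ≤ r, and define α̂ : ℕ → ℂ by α̂_{(r+1)(rm+k)+i} := a*_{k+i+1} − a*_i + m for m ∈ ℕ, 0 ≤ k ≤ r−1, 0 ≤ i ≤ r. Let Ĥ := L_1 ⋯ L_r U built from (α̂_n). Then there is a unique monic polynomial sequence (P̂_n) with deg P̂_n = n satisfying the type II step-line orthogonality conditions with respect to (v_1,…,v_r), and it satisfies x P̂_n(x)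 = Σ_{ℓ=0}^{n+1} Ĥ_{n,ℓ} P̂_ℓ(x) for all n ∈ ℕ; that is, the Hessenberg recurrence matrix of the multiple Laguerre polynomials of the first kind on the step-line admits the bidiagonal factorisation Ĥ = L_1 ⋯ L_r U. -/
open Polynomial Finset

noncomputable section

/-- The Pochhammer symbol `(z)_n = z(z+1)⋯(z+n−1)`. -/
def poch (z : ℂ) (n : ℕ) : ℂ := ∏ i ∈ Finset.range n, (z + i)

/-- The upper-bidiagonal matrix `U`: `U_{n,n} = α_{(r+1)n}`, `U_{n,n+1} = 1`. -/
def Umat (r : ℕ) (α : ℕ → ℂ) : ℕ → ℕ → ℂ := fun n ℓ =>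
  if ℓ = n then α ((r + 1) * n) else if ℓ = n + 1 then 1 else 0

/-- The lower-bidiagonal matrix `L_k`: `(L_k)_{n,n} = 1`, `(L_k)_{n+1,n} = α_{(r+1)n+k}`. -/
def Lmat (r k : ℕ) (α : ℕ → ℂ) : ℕ → ℕ → ℂ := fun n ℓ =>
  if ℓ = n then 1 else if n = ℓ + 1 then α ((r + 1) * ℓ + k) else 0

/-- Entrywise product (finite sum, as the left factors have row `n`
supported in columns `< n+2`). -/
def bidMul (X Y : ℕ → ℕ → ℂ) : ℕ → ℕ → ℂ := fun n ℓ =>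
  ∑ k ∈ Finset.range (n + 2), X n k * Y k ℓ

/-- Product of a list of such matrices. -/
def listProd : List (ℕ → ℕ → ℂ) → ℕ → ℕ → ℂ
  | [] => fun n ℓ => if n = ℓ then 1 else 0
  | X :: rest => bidMul X (listProd rest)

/-- The Hessenberg matrix `H = L_1 ⋯ L_r U`. -/
def Hprod (r : ℕ) (α : ℕ → ℂ) : ℕ → ℕ → ℂ :=
  listProd (((List.range' 1 r).map fun k => Lmat r k α) ++ [Umat r α])

/-- `P` is the sequence of monic type II multiple orthogonal polynomials on
the step-line with respect to the system `v`. -/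
def TypeII (r : ℕ) (v : ℕ → LF) (P : ℕ → Polynomial ℂ) : Prop :=
  ∀ n, (P n).Monic ∧ (P n).natDegree = n ∧
    ∀ k j, j < r → r * k + j < n → v j (Polynomial.X ^ k * P n) = 0

/-- `a*_0 := −1` and `a*_{rn+j} := a_j + n` for `n ∈ ℕ`, `1 ≤ j ≤ r`. -/
def aStar (r : ℕ) (a : ℕ → ℝ) (m : ℕ) : ℝ :=
  if m = 0 then -1 else a ((m - 1) % r + 1) + ((m - 1) / r : ℕ)

/-- The multiple Laguerre (first kind) coefficients
`α̂_{(r+1)(rm+k)+i} = a*_{k+i+1} − a*_i + m`. -/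
def alphaLag (r : ℕ) (a : ℕ → ℝ) (n : ℕ) : ℂ :=
  let i := n % (r + 1)
  let s := n / (r + 1)
  let k := s % r
  let m := s / r
  ((aStar r a (k + i + 1) - aStar r a i + m : ℝ) : ℂ)

-- auxiliary lemmas
lemma aStar_val (r : ℕ) (a : ℕ → ℝ) (p : ℕ) (hp : 1 ≤ p) :
    aStar r a p = a ((p - 1) % r + 1) + ((p - 1) / r : ℕ) := if_neg (by omega)

lemma aStar_shift (r : ℕ) (hr : 1 ≤ r) (a : ℕ → ℝ) (p m : ℕ) (hp : 1 ≤ p) :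
    aStar r a (p + r * m) = aStar r a p + m := by
  rw [aStar_val r a _ (by omega), aStar_val r a p hp]
  have h1 : p + r * m - 1 = (p - 1) + m * r := by rw [Nat.mul_comm m r]; omega
  rw [h1, Nat.add_mul_mod_self_right, Nat.add_mul_div_right _ _ (by omega : 0 < r)]
  push_cast; ring

lemma alphaLag_eq (r : ℕ) (hr : 1 ≤ r) (a : ℕ → ℝ) (ℓ k : ℕ) (hk : k ≤ r) :
    alphaLag r a ((r+1)*ℓ+k) = ((aStar r a (ℓ+k+1) - aStar r a k : ℝ) : ℂ) := by
  have h1 : ((r+1)*ℓ+k) % (r+1) = k := by rw [Nat.mul_add_mod]; exact Nat.mod_eq_of_lt (by omega)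
  have h2 : ((r+1)*ℓ+k) / (r+1) = ℓ := by
    rw [Nat.mul_add_div (by omega)]
    simp [Nat.div_eq_of_lt (show k < r+1 by omega)]
  have h3 : aStar r a (ℓ+k+1) = aStar r a (ℓ % r + k + 1) + (ℓ / r : ℕ) := by
    have h4 : ℓ + k + 1 = (ℓ % r + k + 1) + r * (ℓ / r) := by
      have := Nat.div_add_mod ℓ r; omega
    rw [h4, aStar_shift r hr a _ _ (by omega)]
  unfold alphaLag
  simp only [h1, h2, h3]
  push_cast; ring


def piProd (A : ℕ → ℂ) (X : ℂ) (n : ℕ) : ℂ := ∏ t ∈ Finset.range n, (X - A (t+1))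
def Gfun (A : ℕ → ℂ) (X : ℂ) (k n : ℕ) : ℂ := (X+1) * ∏ t ∈ Finset.range n, (X + 1 - A (k+1+t))

lemma G_step (A : ℕ → ℂ) (X : ℂ) (k n : ℕ) :
    Gfun A X k (n+1) = Gfun A X (k+1) (n+1) + (A (k+n+2) - A (k+1)) * Gfun A X (k+1) n := by
  unfold Gfun
  rw [Finset.prod_range_succ', Finset.prod_range_succ]
  have h1 : ∀ t, k + 1 + (t + 1) = k + 2 + t := fun t => by omega
  have h2 : k + 1 + 1 = k + 2 := by omega
  have h3 : k + 1 + n = k + n + 1 := by omega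
  simp only [h1, h2, h3]
  have h4 : A (k+n+2) = A (k+2+n) := by congr 1; omega
  rw [h4]; ring

-- band structure: entries vanish above the first superdiagonal
lemma listProd_band (Ms : List (ℕ → ℕ → ℂ)) (U' : ℕ → ℕ → ℂ)
    (hMs : ∀ M ∈ Ms, ∀ n ℓ, n < ℓ → M n ℓ = 0)
    (hU : ∀ n ℓ, n + 1 < ℓ → U' n ℓ = 0) :
    ∀ n ℓ, n + 1 < ℓ → listProd (Ms ++ [U']) n ℓ = 0 := by
  induction Ms with
  | nil =>
    intro n ℓ h
    show bidMul U' (listProd []) n ℓ = 0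
    apply Finset.sum_eq_zero
    intro k hk
    simp only [Finset.mem_range] at hk
    rcases eq_or_ne k ℓ with h2 | h2
    · subst h2; exact absurd hk (by omega)
    · show U' n k * (if k = ℓ then 1 else 0) = 0
      rw [if_neg h2]; ring
  | cons M Ms ih =>
    intro n ℓ h
    show bidMul M (listProd (Ms ++ [U'])) n ℓ = 0
    apply Finset.sum_eq_zero
    intro k hk
    rcases le_or_gt k n with h2 | h2
    · rw [ih (fun M hM => hMs M (List.mem_cons_of_mem _ hM)) k ℓ (by omega)]; ring
    · rw [hMs M (List.mem_cons_self) n k h2]; ring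

lemma listProd_super (Ms : List (ℕ → ℕ → ℂ)) (U' : ℕ → ℕ → ℂ)
    (hMs : ∀ M ∈ Ms, ∀ n ℓ, n < ℓ → M n ℓ = 0) (hMd : ∀ M ∈ Ms, ∀ n, M n n = 1)
    (hU : ∀ n ℓ, n + 1 < ℓ → U' n ℓ = 0) (hUs : ∀ n, U' n (n+1) = 1) :
    ∀ n, listProd (Ms ++ [U']) n (n+1) = 1 := by
  induction Ms with
  | nil =>
    intro n
    show (∑ k ∈ Finset.range (n+2), U' n k * (if k = n+1 then 1 else 0)) = 1
    rw [Finset.sum_eq_single (n+1)]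
    · rw [hUs n, if_pos rfl]; ring
    · intro b _ hb; rw [if_neg hb]; ring
    · intro h; exact absurd (Finset.mem_range.mpr (by omega)) h
  | cons M Ms ih =>
    intro n
    show (∑ k ∈ Finset.range (n+2), M n k * listProd (Ms ++ [U']) k (n+1)) = 1
    have hband := listProd_band Ms U' (fun M hM => hMs M (List.mem_cons_of_mem _ hM)) hU
    rw [Finset.sum_eq_single n]
    · rw [hMd M (List.mem_cons_self) n,
        ih (fun M hM => hMs M (List.mem_cons_of_mem _ hM)) (fun M hM => hMd M (List.mem_cons_of_mem _ hM))]
      ring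
    · intro b _ hb
      rcases lt_or_gt_of_ne hb with h2 | h2
      · rw [hband b (n+1) (by omega)]; ring
      · rw [hMs M (List.mem_cons_self) n b h2]; ring
    · intro h; exact absurd (Finset.mem_range.mpr (by omega)) h

lemma Lmat_lower (r k : ℕ) (α : ℕ → ℂ) : ∀ n ℓ, n < ℓ → Lmat r k α n ℓ = 0 := by
  intro n ℓ h; unfold Lmat; rw [if_neg (by omega), if_neg (by omega)]

lemma Lmat_diag (r k : ℕ) (α : ℕ → ℂ) : ∀ n, Lmat r k α n n = 1 := by
  intro n; unfold Lmat; rw [if_pos rfl]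

lemma Umat_band (r : ℕ) (α : ℕ → ℂ) : ∀ n ℓ, n + 1 < ℓ → Umat r α n ℓ = 0 := by
  intro n ℓ h; unfold Umat; rw [if_neg (by omega), if_neg (by omega)]

lemma Umat_super (r : ℕ) (α : ℕ → ℂ) : ∀ n, Umat r α n (n+1) = 1 := by
  intro n; unfold Umat; rw [if_neg (by omega), if_pos rfl]

lemma listProd_eval (r : ℕ) (hr : 1 ≤ r) (α : ℕ → ℂ) (A : ℕ → ℂ) (X : ℂ)
    (hα : ∀ ℓ k, k ≤ r → α ((r+1)*ℓ+k) = A (ℓ+k+1) - A k)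
    (hA0 : A 0 = -1) (hAs : ∀ p, 1 ≤ p → A (p + r) = A p + 1) :
    ∀ d, d ≤ r → ∀ n,
      ∑ ℓ ∈ Finset.range (n+2),
        listProd (((List.range' (r-d+1) d).map fun k => Lmat r k α) ++ [Umat r α]) n ℓ
          * piProd A X ℓ
        = Gfun A X (r-d) n := by
  intro d
  induction d with
  | zero =>
    intro _ n
    simp only [List.range', List.map_nil, List.nil_append, Nat.sub_zero]
    have hUeval : ∀ ℓ, listProd [Umat r α] n ℓ = if ℓ < n + 2 then Umat r α n ℓ else 0 := by
      intro ℓ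
      show (∑ k ∈ Finset.range (n+2), Umat r α n k * (if k = ℓ then 1 else 0)) = _
      split_ifs with h
      · rw [Finset.sum_eq_single ℓ]
        · rw [if_pos rfl]; ring
        · intro b _ hb; rw [if_neg hb]; ring
        · intro hc; exact absurd (Finset.mem_range.mpr h) hc
      · apply Finset.sum_eq_zero; intro k hk
        rw [if_neg (by simp only [Finset.mem_range] at hk; omega)]; ring
    have hsum : ∑ ℓ ∈ Finset.range (n+2), listProd [Umat r α] n ℓ * piProd A X ℓ
        = ∑ ℓ ∈ Finset.range (n+2), Umat r α n ℓ * piProd A X ℓ := by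
      apply Finset.sum_congr rfl; intro ℓ hℓ
      rw [hUeval ℓ, if_pos (Finset.mem_range.mp hℓ)]
    rw [hsum, Finset.sum_range_succ, Finset.sum_range_succ]
    have hz : ∑ ℓ ∈ Finset.range n, Umat r α n ℓ * piProd A X ℓ = 0 := by
      apply Finset.sum_eq_zero; intro ℓ hℓ
      simp only [Finset.mem_range] at hℓ
      unfold Umat; rw [if_neg (by omega), if_neg (by omega)]; ring
    have hdiag : Umat r α n n = A (n+1) + 1 := by
      unfold Umat; rw [if_pos rfl]
      have : (r+1)*n = (r+1)*n + 0 := by omega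
      rw [this, hα n 0 (by omega), hA0]; ring
    have hsuper : Umat r α n (n+1) = 1 := Umat_super r α n
    rw [hz, hdiag, hsuper, zero_add]
    unfold piProd Gfun
    rw [Finset.prod_range_succ]
    have hprod : ∏ t ∈ Finset.range n, (X + 1 - A (r+1+t))
        = ∏ t ∈ Finset.range n, (X - A (t+1)) := by
      apply Finset.prod_congr rfl; intro t _
      have h5 : r+1+t = (t+1) + r := by omega
      rw [h5, hAs (t+1) (by omega)]; ring
    rw [hprod]; ring
  | succ d ih =>
    intro hd n
    set k := r - (d+1) with hk
    have hk1 : r - d = k + 1 := by omega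
    have hlist : List.range' (r-(d+1)+1) (d+1) = (k+1) :: List.range' (r-d+1) d := by
      rw [hk1]; rfl
    rw [hlist]
    simp only [List.map_cons, List.cons_append]
    set Y := listProd (((List.range' (r-d+1) d).map fun j => Lmat r j α) ++ [Umat r α]) with hY
    have hband : ∀ t ℓ, t + 1 < ℓ → Y t ℓ = 0 := by
      apply listProd_band
      · intro M hM
        simp only [List.mem_map] at hM
        obtain ⟨j, _, rfl⟩ := hM
        exact Lmat_lower r j α
      · exact Umat_band r α
    show (∑ ℓ ∈ Finset.range (n+2), (∑ t ∈ Finset.range (n+2), Lmat r (k+1) α n t * Y t ℓ)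
        * piProd A X ℓ) = _
    simp only [Finset.sum_mul]
    rw [Finset.sum_comm]
    simp only [mul_assoc, ← Finset.mul_sum]
    have hinner : ∀ t, t ≤ n → (∑ ℓ ∈ Finset.range (n+2), Y t ℓ * piProd A X ℓ)
        = Gfun A X (k+1) t := by
      intro t ht
      have heq : ∑ ℓ ∈ Finset.range (n+2), Y t ℓ * piProd A X ℓ
          = ∑ ℓ ∈ Finset.range (t+2), Y t ℓ * piProd A X ℓ := by
        symm; apply Finset.sum_subset
        · intro x hx; simp only [Finset.mem_range] at *; omega
        · intro x hx1 hx2; simp only [Finset.mem_range] at hx1 hx2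
          rw [hband t x (by omega)]; ring
      rw [heq, ih (by omega) t, hk1]
    have hk1r : k + 1 ≤ r := by omega
    rcases Nat.eq_zero_or_pos n with rfl | hn
    · rw [Finset.sum_range_succ, Finset.sum_range_succ, Finset.sum_range_zero]
      rw [Lmat_diag, Lmat_lower r _ α 0 1 (by omega), hinner 0 (by omega)]
      unfold Gfun; simp
    · obtain ⟨n', rfl⟩ : ∃ n', n = n' + 1 := ⟨n - 1, by omega⟩
      rw [Finset.sum_range_succ, Finset.sum_range_succ, Finset.sum_range_succ]
      have hz : ∑ t ∈ Finset.range n', Lmat r (k+1) α (n'+1) t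
          * (∑ ℓ ∈ Finset.range (n'+1+2), Y t ℓ * piProd A X ℓ) = 0 := by
        apply Finset.sum_eq_zero; intro t ht
        simp only [Finset.mem_range] at ht
        have : Lmat r (k+1) α (n'+1) t = 0 := by
          unfold Lmat; rw [if_neg (by omega), if_neg (by omega)]
        rw [this]; ring
      have hsub : Lmat r (k+1) α (n'+1) n' = A (n'+k+2) - A (k+1) := by
        unfold Lmat; rw [if_neg (by omega), if_pos rfl, hα n' (k+1) hk1r]
        have h9 : n' + (k + 1) + 1 = n' + k + 2 := by omega
        rw [h9]
      rw [hz, Lmat_diag, Lmat_lower r _ α (n'+1) (n'+2) (by omega), hsub,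
        hinner n' (by omega), hinner (n'+1) (by omega), G_step A X k n']
      ring

lemma Hprod_super (r : ℕ) (α : ℕ → ℂ) (n : ℕ) : Hprod r α n (n+1) = 1 := by
  apply listProd_super
  · intro M hM; simp only [List.mem_map] at hM; obtain ⟨j, _, rfl⟩ := hM; exact Lmat_lower r j α
  · intro M hM; simp only [List.mem_map] at hM; obtain ⟨j, _, rfl⟩ := hM; exact Lmat_diag r j α
  · exact Umat_band r α
  · exact Umat_super r α

lemma Hprod_eval (r : ℕ) (hr : 1 ≤ r) (a : ℕ → ℝ) (X : ℂ) (n : ℕ) :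
    ∑ ℓ ∈ Finset.range (n+2), Hprod r (alphaLag r a) n ℓ
        * piProd (fun m => ((aStar r a m : ℝ) : ℂ)) X ℓ
      = (X+1) * ∏ t ∈ Finset.range n, (X + 1 - ((aStar r a (t+1) : ℝ) : ℂ)) := by
  have hα : ∀ ℓ k, k ≤ r → alphaLag r a ((r+1)*ℓ+k)
      = ((aStar r a (ℓ+k+1) : ℝ) : ℂ) - ((aStar r a k : ℝ) : ℂ) := by
    intro ℓ k hk; rw [alphaLag_eq r hr a ℓ k hk]; push_cast; ring
  have hA0 : ((aStar r a 0 : ℝ) : ℂ) = -1 := by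
    unfold aStar; rw [if_pos rfl]; norm_num
  have hAs : ∀ p, 1 ≤ p → ((aStar r a (p + r) : ℝ) : ℂ) = ((aStar r a p : ℝ) : ℂ) + 1 := by
    intro p hp
    have := aStar_shift r hr a p 1 hp
    rw [mul_one] at this; rw [this]; push_cast; ring
  have h := listProd_eval r hr (alphaLag r a) (fun m => ((aStar r a m : ℝ) : ℂ)) X hα hA0 hAs
    r le_rfl n
  rw [Nat.sub_self] at h
  unfold Hprod
  rw [show (0:ℕ)+1 = 1 from rfl] at h
  rw [h]
  unfold Gfun
  congr 1
  apply Finset.prod_congr rfl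
  intro t _
  norm_num
  rw [Nat.add_comm 1 t]

/-- normalised moments of the system along the step line -/
def muL (r : ℕ) (a : ℕ → ℝ) (m : ℕ) : ℂ := poch ((a (m % r + 1) : ℂ) + 1) (m / r)

/-- the closed form for `u_m(P_n)` -/
def Fc (r : ℕ) (a : ℕ → ℝ) (m n : ℕ) : ℂ :=
  muL r a m * piProd (fun t => ((aStar r a t : ℝ) : ℂ)) ((aStar r a (m+1) : ℝ) : ℂ) n

lemma aStar_succ_eq (r : ℕ) (hr : 1 ≤ r) (a : ℕ → ℝ) (m : ℕ) :
    aStar r a (m+1) = a (m % r + 1) + (m / r : ℕ) := by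
  rw [aStar_val r a (m+1) (by omega)]
  simp

lemma mu_step (r : ℕ) (hr : 1 ≤ r) (a : ℕ → ℝ) (m : ℕ) :
    muL r a (m+r) = (((aStar r a (m+1) : ℝ) : ℂ) + 1) * muL r a m := by
  unfold muL
  rw [Nat.add_mod_right, Nat.add_div_right m (by omega)]
  unfold poch
  rw [Finset.prod_range_succ, aStar_succ_eq r hr a m]
  push_cast; ring

lemma F_zero (r : ℕ) (a : ℕ → ℝ) (m n : ℕ) (h : m < n) : Fc r a m n = 0 := by
  unfold Fc piProd
  rw [Finset.prod_eq_zero (Finset.mem_range.mpr h : m ∈ Finset.range n) (by ring)]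
  ring

lemma F_step (r : ℕ) (hr : 1 ≤ r) (a : ℕ → ℝ) (m n : ℕ) :
    Fc r a (m+r) n
      = ∑ ℓ ∈ Finset.range (n+2), Hprod r (alphaLag r a) n ℓ * Fc r a m ℓ := by
  have hX : ((aStar r a (m+r+1) : ℝ) : ℂ) = ((aStar r a (m+1) : ℝ) : ℂ) + 1 := by
    have h1 : m + r + 1 = (m+1) + r * 1 := by omega
    rw [h1, aStar_shift r hr a (m+1) 1 (by omega)]; push_cast; ring
  set X := ((aStar r a (m+1) : ℝ) : ℂ) with hXdef
  have hrhs : ∑ ℓ ∈ Finset.range (n+2), Hprod r (alphaLag r a) n ℓ * Fc r a m ℓ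
      = muL r a m * ((X+1) * ∏ t ∈ Finset.range n, (X + 1 - ((aStar r a (t+1) : ℝ) : ℂ))) := by
    rw [← Hprod_eval r hr a X n, Finset.mul_sum]
    apply Finset.sum_congr rfl; intro ℓ _
    unfold Fc; ring
  rw [hrhs]
  unfold Fc piProd
  rw [mu_step r hr a m, hX]
  ring

lemma muL_ne (r : ℕ) (hr : 1 ≤ r) (a : ℕ → ℝ)
    (hneg : ∀ j, 1 ≤ j → j ≤ r → ∀ m : ℕ, a j ≠ -(m + 1 : ℕ)) (n : ℕ) :
    muL r a n ≠ 0 := by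
  unfold muL poch
  rw [Finset.prod_ne_zero_iff]
  intro i _
  have hj1 : 1 ≤ n % r + 1 := by omega
  have hj2 : n % r + 1 ≤ r := by have := Nat.mod_lt n (show 0 < r by omega); omega
  intro hc
  apply hneg (n % r + 1) hj1 hj2 i
  have : ((a (n % r + 1) + 1 + i : ℝ) : ℂ) = 0 := by push_cast; linear_combination hc
  have h2 : a (n % r + 1) + 1 + i = 0 := by exact_mod_cast this
  push_cast; linarith

lemma aStar_ne (r : ℕ) (hr : 1 ≤ r) (a : ℕ → ℝ)
    (haij : ∀ i j, 1 ≤ i → i ≤ r → 1 ≤ j → j ≤ r → i ≠ j → ∀ z : ℤ, a i - a j ≠ z)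
    (p q : ℕ) (hq : 1 ≤ q) (hpq : q < p) :
    aStar r a p ≠ aStar r a q := by
  rw [aStar_val r a p (by omega), aStar_val r a q hq]
  set i := (p-1) % r + 1 with hi
  set j := (q-1) % r + 1 with hj
  set d1 := (p-1) / r with hd1
  set d2 := (q-1) / r with hd2
  have hrpos : 0 < r := by omega
  have hir : (p-1) % r < r := Nat.mod_lt _ hrpos
  have hjr : (q-1) % r < r := Nat.mod_lt _ hrpos
  rcases eq_or_ne i j with hij | hij
  · have hmod : (p-1) % r = (q-1) % r := by omega
    have hd : d1 ≠ d2 := by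
      intro hd
      have h1 := Nat.div_add_mod (p-1) r
      have h2 := Nat.div_add_mod (q-1) r
      rw [← hd1, ← hd2, ← hmod, hd] at *
      omega
    rw [hij]
    intro hc
    have : (d1 : ℝ) = d2 := by linarith
    exact hd (by exact_mod_cast this)
  · intro hc
    apply haij i j (by omega) (by omega) (by omega) (by omega) hij ((d2 : ℤ) - d1)
    push_cast
    linarith

lemma F_diag_ne (r : ℕ) (hr : 1 ≤ r) (a : ℕ → ℝ)
    (haij : ∀ i j, 1 ≤ i → i ≤ r → 1 ≤ j → j ≤ r → i ≠ j → ∀ z : ℤ, a i - a j ≠ z)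
    (hneg : ∀ j, 1 ≤ j → j ≤ r → ∀ m : ℕ, a j ≠ -(m + 1 : ℕ)) (n : ℕ) :
    Fc r a n n ≠ 0 := by
  unfold Fc piProd
  apply mul_ne_zero (muL_ne r hr a hneg n)
  rw [Finset.prod_ne_zero_iff]
  intro t ht
  simp only [Finset.mem_range] at ht
  rw [sub_ne_zero]
  intro hc
  have hc2 : ((aStar r a (n+1) : ℝ) : ℂ) = ((aStar r a (t+1) : ℝ) : ℂ) := hc
  exact aStar_ne r hr a haij (n+1) (t+1) (by omega) (by omega) (by exact_mod_cast hc2)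

/-- prefix construction of the monic sequence defined by the Hessenberg recurrence -/
def PhatF (r : ℕ) (α : ℕ → ℂ) : ℕ → ℕ → Polynomial ℂ
  | 0 => fun _ => 1
  | (n+1) => fun m =>
      if m ≤ n then PhatF r α n m
      else Polynomial.X * PhatF r α n n
        - ∑ ℓ ∈ Finset.range (n+1), Polynomial.C (Hprod r α n ℓ) * PhatF r α n ℓ

def Phat (r : ℕ) (α : ℕ → ℂ) (n : ℕ) : Polynomial ℂ := PhatF r α n n

lemma PhatF_eq (r : ℕ) (α : ℕ → ℂ) : ∀ N m, m ≤ N → PhatF r α N m = Phat r α m := by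
  intro N
  induction N with
  | zero => intro m hm; have : m = 0 := by omega
            subst this; rfl
  | succ N ih =>
    intro m hm
    rcases Nat.lt_or_ge m (N+1) with h | h
    · show (if m ≤ N then PhatF r α N m else _) = _
      rw [if_pos (by omega), ih m (by omega)]
    · have : m = N + 1 := by omega
      subst this; rfl

lemma Phat_succ (r : ℕ) (α : ℕ → ℂ) (n : ℕ) :
    Phat r α (n+1) = Polynomial.X * Phat r α n
      - ∑ ℓ ∈ Finset.range (n+1), Polynomial.C (Hprod r α n ℓ) * Phat r α ℓ := by
  show (if n+1 ≤ n then PhatF r α n (n+1) else _) = _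
  rw [if_neg (by omega), PhatF_eq r α n n le_rfl]
  congr 1
  apply Finset.sum_congr rfl
  intro ℓ hℓ
  rw [PhatF_eq r α n ℓ (by simp only [Finset.mem_range] at hℓ; omega)]

lemma Phat_monic (r : ℕ) (α : ℕ → ℂ) :
    ∀ n, (Phat r α n).Monic ∧ (Phat r α n).natDegree = n := by
  intro n
  induction n using Nat.strong_induction_on with
  | _ n ih =>
    match n with
    | 0 => exact ⟨monic_one, natDegree_one⟩
    | (n+1) =>
      rw [Phat_succ]
      have hM : (Polynomial.X * Phat r α n).Monic := monic_X.mul (ih n (by omega)).1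
      have hMd : (Polynomial.X * Phat r α n).natDegree = n + 1 := by
        rw [monic_X.natDegree_mul (ih n (by omega)).1, natDegree_X, (ih n (by omega)).2]
        omega
      have hS : (∑ ℓ ∈ Finset.range (n+1), Polynomial.C (Hprod r α n ℓ) * Phat r α ℓ).degree
          < ((n+1 : ℕ) : WithBot ℕ) := by
        apply lt_of_le_of_lt (Polynomial.degree_sum_le _ _)
        rw [Finset.sup_lt_iff (by exact_mod_cast WithBot.bot_lt_coe (n+1))]
        intro ℓ hℓ
        simp only [Finset.mem_range] at hℓ
        calc (Polynomial.C (Hprod r α n ℓ) * Phat r α ℓ).degree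
            ≤ (Polynomial.C (Hprod r α n ℓ)).degree + (Phat r α ℓ).degree :=
              Polynomial.degree_mul_le _ _
          _ ≤ 0 + (ℓ : WithBot ℕ) := by
              have h10 := Polynomial.degree_le_natDegree (p := Phat r α ℓ)
              rw [(ih ℓ (by omega)).2] at h10
              exact add_le_add Polynomial.degree_C_le h10
          _ < _ := by rw [zero_add]; exact_mod_cast hℓ
      have hdeg : (Polynomial.X * Phat r α n).degree = ((n+1 : ℕ) : WithBot ℕ) := by
        rw [Polynomial.degree_eq_natDegree hM.ne_zero, hMd]
      have hS' : (∑ ℓ ∈ Finset.range (n+1), Polynomial.C (Hprod r α n ℓ) * Phat r α ℓ).degree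
          < (Polynomial.X * Phat r α n).degree := by rw [hdeg]; exact hS
      refine ⟨hM.sub_of_left hS', ?_⟩
      apply Polynomial.natDegree_eq_of_degree_eq_some
      rw [Polynomial.degree_sub_eq_left_of_degree_lt hS', hdeg]

/-- the step-line hierarchy of functionals -/
def uFun (r : ℕ) (v : ℕ → LF) (m : ℕ) (p : Polynomial ℂ) : ℂ :=
  v (m % r) (Polynomial.X ^ (m / r) * p)

lemma u_shift (r : ℕ) (hr : 1 ≤ r) (v : ℕ → LF) (m : ℕ) (p : Polynomial ℂ) :
    uFun r v m (Polynomial.X * p) = uFun r v (m + r) p := by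
  unfold uFun
  rw [Nat.add_mod_right, Nat.add_div_right m (by omega)]
  congr 1
  rw [pow_succ]
  ring

lemma u_one (r : ℕ) (hr : 1 ≤ r) (a : ℕ → ℝ) (v : ℕ → LF)
    (hv : ∀ j, j < r → ∀ n, v j (Polynomial.X ^ n) = poch ((a (j + 1) : ℂ) + 1) n) (m : ℕ) :
    uFun r v m 1 = muL r a m := by
  unfold uFun muL
  rw [mul_one, hv (m % r) (Nat.mod_lt m (by omega)) (m / r)]

lemma u_smul (r : ℕ) (v : ℕ → LF) (m : ℕ) (c : ℂ) (p : Polynomial ℂ) :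
    uFun r v m (Polynomial.C c * p) = c * uFun r v m p := by
  unfold uFun
  rw [mul_left_comm, ← Polynomial.smul_eq_C_mul, map_smul, smul_eq_mul]

lemma u_sub (r : ℕ) (v : ℕ → LF) (m : ℕ) (p q : Polynomial ℂ) :
    uFun r v m (p - q) = uFun r v m p - uFun r v m q := by
  unfold uFun
  rw [mul_sub, map_sub]

lemma u_sum (r : ℕ) (v : ℕ → LF) (m : ℕ) (s : Finset ℕ) (f : ℕ → Polynomial ℂ) :
    uFun r v m (∑ i ∈ s, f i) = ∑ i ∈ s, uFun r v m (f i) := by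
  unfold uFun
  rw [Finset.mul_sum, map_sum]

lemma cval (r : ℕ) (hr : 1 ≤ r) (a : ℕ → ℝ) (v : ℕ → LF)
    (hv : ∀ j, j < r → ∀ n, v j (Polynomial.X ^ n) = poch ((a (j + 1) : ℂ) + 1) n) :
    ∀ n m, uFun r v m (Phat r (alphaLag r a) n) = Fc r a m n := by
  intro n
  induction n using Nat.strong_induction_on with
  | _ n ih =>
    match n with
    | 0 =>
      intro m
      have h0 : Phat r (alphaLag r a) 0 = 1 := rfl
      rw [h0, u_one r hr a v hv m]
      unfold Fc piProd
      rw [Finset.range_zero, Finset.prod_empty, mul_one]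
    | (n+1) =>
      intro m
      rw [Phat_succ, u_sub, u_shift r hr v, u_sum, ih n (by omega)]
      have hterm : ∀ ℓ ∈ Finset.range (n+1),
          uFun r v m (Polynomial.C (Hprod r (alphaLag r a) n ℓ) * Phat r (alphaLag r a) ℓ)
            = Hprod r (alphaLag r a) n ℓ * Fc r a m ℓ := by
        intro ℓ hℓ
        simp only [Finset.mem_range] at hℓ
        rw [u_smul, ih ℓ (by omega)]
      rw [Finset.sum_congr rfl hterm, F_step r hr a m n, Finset.sum_range_succ,
        Hprod_super, one_mul]
      ring


lemma u_apply (r : ℕ) (hr : 1 ≤ r) (v : ℕ → LF) (k j : ℕ) (hj : j < r) (p : Polynomial ℂ) :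
    v j (Polynomial.X ^ k * p) = uFun r v (r*k+j) p := by
  unfold uFun
  rw [Nat.mul_add_mod, Nat.mod_eq_of_lt hj, Nat.mul_add_div (by omega), Nat.div_eq_of_lt hj,
    Nat.add_zero]

lemma typeII_Phat (r : ℕ) (hr : 1 ≤ r) (a : ℕ → ℝ) (v : ℕ → LF)
    (hv : ∀ j, j < r → ∀ n, v j (Polynomial.X ^ n) = poch ((a (j + 1) : ℂ) + 1) n) :
    TypeII r v (Phat r (alphaLag r a)) := by
  intro n
  refine ⟨(Phat_monic _ _ n).1, (Phat_monic _ _ n).2, ?_⟩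
  intro k j hj hkj
  rw [u_apply r hr v k j hj, cval r hr a v hv n (r*k+j), F_zero r a _ _ hkj]

lemma ortho_zero (r : ℕ) (hr : 1 ≤ r) (a : ℕ → ℝ)
    (haij : ∀ i j, 1 ≤ i → i ≤ r → 1 ≤ j → j ≤ r → i ≠ j → ∀ z : ℤ, a i - a j ≠ z)
    (hneg : ∀ j, 1 ≤ j → j ≤ r → ∀ m : ℕ, a j ≠ -(m + 1 : ℕ))
    (v : ℕ → LF)
    (hv : ∀ j, j < r → ∀ n, v j (Polynomial.X ^ n) = poch ((a (j + 1) : ℂ) + 1) n) :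
    ∀ n (q : Polynomial ℂ), q.degree < (n : ℕ) → (∀ m, m < n → uFun r v m q = 0) → q = 0 := by
  intro n
  induction n with
  | zero =>
    intro q hdeg _
    rw [← Polynomial.degree_eq_bot]
    exact Nat.WithBot.lt_zero_iff.mp (by exact_mod_cast hdeg)
  | succ n ih =>
    intro q hdeg horth
    set c := q.coeff n with hc
    set q' := q - Polynomial.C c * Phat r (alphaLag r a) n with hq'
    have hmon := (Phat_monic r (alphaLag r a) n).1
    have hdegP := (Phat_monic r (alphaLag r a) n).2
    have hdq' : q'.degree < (n : ℕ) := by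
      rw [Polynomial.degree_lt_iff_coeff_zero]
      intro m hm
      have hm' : n ≤ m := by exact_mod_cast hm
      rw [hq', Polynomial.coeff_sub, Polynomial.coeff_C_mul]
      rcases eq_or_lt_of_le hm' with h | h
      · rw [← h]
        have hco : (Phat r (alphaLag r a) n).coeff n = 1 := by
          have h5 := hmon.coeff_natDegree
          rwa [hdegP] at h5
        rw [hco, mul_one, ← hc, sub_self]
      · have h1 : q.coeff m = 0 := by
          apply Polynomial.coeff_eq_zero_of_degree_lt
          exact lt_of_lt_of_le hdeg (by exact_mod_cast h)
        have h2 : (Phat r (alphaLag r a) n).coeff m = 0 := by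
          apply Polynomial.coeff_eq_zero_of_natDegree_lt
          rw [hdegP]; exact h
        rw [h1, h2, mul_zero, sub_self]
    have horth' : ∀ m, m < n → uFun r v m q' = 0 := by
      intro m hm
      rw [hq', u_sub, u_smul, cval r hr a v hv n m, F_zero r a m n hm,
        horth m (by omega), mul_zero, sub_self]
    have hz := ih q' hdq' horth'
    have hqeq : q = Polynomial.C c * Phat r (alphaLag r a) n := by
      have := sub_eq_zero.mp hz
      linear_combination (norm := ring_nf) this
    have hun : uFun r v n q = c * Fc r a n n := by
      rw [hqeq, u_smul, cval r hr a v hv n n]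
    have hc0 : c = 0 := by
      have h3 := horth n (by omega)
      rw [hun] at h3
      exact (mul_eq_zero.mp h3).resolve_right (F_diag_ne r hr a haij hneg n)
    rw [hqeq, hc0, map_zero, zero_mul]

lemma typeII_unique (r : ℕ) (hr : 1 ≤ r) (a : ℕ → ℝ)
    (haij : ∀ i j, 1 ≤ i → i ≤ r → 1 ≤ j → j ≤ r → i ≠ j → ∀ z : ℤ, a i - a j ≠ z)
    (hneg : ∀ j, 1 ≤ j → j ≤ r → ∀ m : ℕ, a j ≠ -(m + 1 : ℕ))
    (v : ℕ → LF)
    (hv : ∀ j, j < r → ∀ n, v j (Polynomial.X ^ n) = poch ((a (j + 1) : ℂ) + 1) n)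
    (Q : ℕ → Polynomial ℂ) (hQ : TypeII r v Q) :
    ∀ n, Q n = Phat r (alphaLag r a) n := by
  intro n
  obtain ⟨hQm, hQd, hQo⟩ := hQ n
  by_cases h : Q n = Phat r (alphaLag r a) n
  · exact h
  have hmon := (Phat_monic r (alphaLag r a) n).1
  have hdegP := (Phat_monic r (alphaLag r a) n).2
  have hdeg : (Q n - Phat r (alphaLag r a) n).degree < (n : ℕ) := by
    have h1 : (Q n).degree = (Phat r (alphaLag r a) n).degree := by
      rw [Polynomial.degree_eq_natDegree hQm.ne_zero,
        Polynomial.degree_eq_natDegree hmon.ne_zero, hQd, hdegP]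
    have h2 := Polynomial.degree_sub_lt h1 hQm.ne_zero (by rw [hQm.leadingCoeff, hmon.leadingCoeff])
    rwa [Polynomial.degree_eq_natDegree hQm.ne_zero, hQd] at h2
  have horth : ∀ m, m < n → uFun r v m (Q n - Phat r (alphaLag r a) n) = 0 := by
    intro m hm
    rw [u_sub]
    have hjr : m % r < r := Nat.mod_lt m (by omega)
    have hQ0 : uFun r v m (Q n) = 0 := by
      unfold uFun
      apply hQo (m / r) (m % r) hjr
      rw [Nat.div_add_mod m r]
      exact hm
    have hP0 : uFun r v m (Phat r (alphaLag r a) n) = 0 := by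
      rw [cval r hr a v hv n m, F_zero r a m n hm]
    rw [hQ0, hP0, sub_self]
  have := ortho_zero r hr a haij hneg v hv n _ hdeg horth
  exact sub_eq_zero.mp this

theorem stmt17 (r : ℕ) (hr : 1 ≤ r) (a : ℕ → ℝ)
    (haij : ∀ i j, 1 ≤ i → i ≤ r → 1 ≤ j → j ≤ r → i ≠ j → ∀ z : ℤ, a i - a j ≠ z)
    (hneg : ∀ j, 1 ≤ j → j ≤ r → ∀ m : ℕ, a j ≠ -(m + 1 : ℕ))
    (v : ℕ → LF)
    (hv : ∀ j, j < r → ∀ n, v j (Polynomial.X ^ n) = poch ((a (j + 1) : ℂ) + 1) n) :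
    -- existence and uniqueness of the type II multiple Laguerre polynomials
    (∃! P : ℕ → Polynomial ℂ, TypeII r v P) ∧
    -- and the recurrence with the bidiagonally factorised Hessenberg matrix
    (∀ P : ℕ → Polynomial ℂ, TypeII r v P →
      ∀ n, Polynomial.X * P n
        = ∑ ℓ ∈ Finset.range (n + 2),
            Polynomial.C (Hprod r (alphaLag r a) n ℓ) * P ℓ) := by
  constructor
  · exact ⟨Phat r (alphaLag r a), typeII_Phat r hr a v hv,
      fun Q hQ => funext (typeII_unique r hr a haij hneg v hv Q hQ)⟩
  · intro P hP n
    have hPeq := typeII_unique r hr a haij hneg v hv P hP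
    rw [hPeq n, Finset.sum_congr rfl
      (fun ℓ _ => by rw [hPeq ℓ] :
        ∀ ℓ ∈ Finset.range (n+2), Polynomial.C (Hprod r (alphaLag r a) n ℓ) * P ℓ
          = Polynomial.C (Hprod r (alphaLag r a) n ℓ) * Phat r (alphaLag r a) ℓ),
      Finset.sum_range_succ, Hprod_super, Polynomial.C_1, one_mul, Phat_succ]
    ring
end
end

section
/- Fix r ≥ 1 and real parameters a_1,…,a_r, b with a_i − a_j ∉ ℤ for i ≠ j and none of a_j, a_j+b+1 a negative integer, and let (α_n)_{n∈ℕ} be the coefficients of the bidiagonal factorisation of the Jacobi–Piñeiro Hessenberg recurrence matrix, given explicitly (with a_0 := −1, writing each index as n = (r+1)(rm+k)+i with m ∈ ℕ, 0 ≤ k ≤ r−1, 0 ≤ i ≤ r) by: if k+i ≤ r−1, α_n = (a_{k+i+1}−a_i+m)·∏_{j=0}^{i−1}(a_j+b+rm+k+2)·∏_{j=i+1}^{r}(a_j+b+rm+k+1) / [∏_{j=1}^{k+i+1}(a_j+b+(r+1)m+k+2)·∏_{j=k+i+1}^{r}(a_j+b+(r+1)m+k+1)], and if k+i ≥ r, α_n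 = (a_{k+i−r+1}−a_i+m+1)·∏_{j=0}^{i−1}(a_j+b+rm+k+2)·∏_{j=i+1}^{r}(a_j+b+rm+k+1) / [∏_{j=1}^{k+i+1−r}(a_j+b+(r+1)m+k+3)·∏_{j=k+i+1−r}^{r}(a_j+b+(r+1)m+k+2)]. Then α_n → r^r/(r+1)^{r+1} as n → ∞, and consequently, for each 0 ≤ k ≤ r, the entries γ_n^{[k]} := (L_1⋯L_rU)_{n+k,n} of the Hessenberg matrix built from (α_n) satisfy γ_n^{[k]} → C(r+1, k+1) · (r^r/(r+1)^{r+1})^{k+1} as n → ∞, where C(r+1, k+1) is the binomial coefficient. -/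
open Polynomial Finset Filter

noncomputable section

/-- The explicit Jacobi–Piñeiro coefficients: writing `n = (r+1)(rm+k)+i`
with `0 ≤ k ≤ r−1`, `0 ≤ i ≤ r` (and `a 0 = −1`). -/
def alphaJP (r : ℕ) (a : ℕ → ℝ) (b : ℝ) (n : ℕ) : ℂ :=
  let i := n % (r + 1)
  let s := n / (r + 1)
  let k := s % r
  let m := s / r
  if k + i < r then
    (((a (k + i + 1) - a i + m)
        * (∏ j ∈ Finset.range i, (a j + b + r * m + k + 2))
        * (∏ j ∈ Finset.Icc (i + 1) r, (a j + b + r * m + k + 1)))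
      / ((∏ j ∈ Finset.Icc 1 (k + i + 1), (a j + b + (r + 1) * m + k + 2))
        * (∏ j ∈ Finset.Icc (k + i + 1) r, (a j + b + (r + 1) * m + k + 1))) : ℝ)
  else
    (((a (k + i - r + 1) - a i + m + 1)
        * (∏ j ∈ Finset.range i, (a j + b + r * m + k + 2))
        * (∏ j ∈ Finset.Icc (i + 1) r, (a j + b + r * m + k + 1)))
      / ((∏ j ∈ Finset.Icc 1 (k + i + 1 - r), (a j + b + (r + 1) * m + k + 3))
        * (∏ j ∈ Finset.Icc (k + i + 1 - r) r, (a j + b + (r + 1) * m + k + 2))) : ℝ)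

lemma JPlin (c ρ : ℝ) : Tendsto (fun m : ℕ => (c + ρ * m) / m) atTop (nhds ρ) := by
  have h1 : Tendsto (fun m : ℕ => ((m : ℝ))⁻¹) atTop (nhds 0) :=
    tendsto_inv_atTop_zero.comp tendsto_natCast_atTop_atTop
  have h : Tendsto (fun m : ℕ => c * ((m : ℝ))⁻¹ + ρ) atTop (nhds (c * 0 + ρ)) :=
    Tendsto.add_const ρ (h1.const_mul c)
  rw [mul_zero, zero_add] at h
  refine h.congr' ?_
  filter_upwards [eventually_ge_atTop 1] with m hm
  have hm' : (m : ℝ) ≠ 0 := Nat.cast_ne_zero.mpr (by omega)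
  field_simp

lemma JPprod (S : Finset ℕ) (c : ℕ → ℝ) (ρ : ℝ) :
    Tendsto (fun m : ℕ => (∏ j ∈ S, (c j + ρ * m)) / (m : ℝ) ^ S.card) atTop
      (nhds (ρ ^ S.card)) := by
  have h : Tendsto (fun m : ℕ => ∏ j ∈ S, ((c j + ρ * m) / m)) atTop (nhds (∏ _j ∈ S, ρ)) :=
    tendsto_finset_prod S (fun j _ => JPlin (c j) ρ)
  rw [Finset.prod_const] at h
  refine h.congr' ?_
  filter_upwards [eventually_ge_atTop 1] with m hm
  rw [Finset.prod_div_distrib, Finset.prod_const]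

lemma JPdiv {N D : ℕ → ℝ} {e : ℕ} {A B : ℝ} (hB : B ≠ 0)
    (hN : Tendsto (fun m : ℕ => N m / (m : ℝ) ^ e) atTop (nhds A))
    (hD : Tendsto (fun m : ℕ => D m / (m : ℝ) ^ e) atTop (nhds B)) :
    Tendsto (fun m : ℕ => N m / D m) atTop (nhds (A / B)) := by
  have h := hN.div hD hB
  refine h.congr' ?_
  filter_upwards [eventually_ge_atTop 1] with m hm
  have hm' : ((m : ℝ)) ^ e ≠ 0 := pow_ne_zero _ (Nat.cast_ne_zero.mpr (by omega))
  rcases eq_or_ne (D m) 0 with h0 | h0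
  · simp [h0]
  · simp only [Pi.div_apply]
    field_simp

lemma JPclasses {f : ℕ → ℂ} {L : ℂ} (M : ℕ) (hM : 0 < M)
    (h : ∀ j, j < M → Tendsto (fun m => f (M * m + j)) atTop (nhds L)) :
    Tendsto f atTop (nhds L) := by
  rw [Metric.tendsto_atTop]
  intro ε hε
  choose N hN using fun (j : ℕ) (hj : j < M) => Metric.tendsto_atTop.mp (h j hj) ε hε
  set N₀ := Finset.sup (Finset.range M) (fun j => if hj : j < M then N j hj else 0) with hN₀
  refine ⟨M * (N₀ + 1), fun n hn => ?_⟩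
  have hj : n % M < M := Nat.mod_lt _ hM
  have hm : N₀ ≤ n / M := by
    have h1 : (N₀ + 1) * M ≤ n := by
      calc (N₀ + 1) * M = M * (N₀ + 1) := by ring
      _ ≤ n := hn
    have := (Nat.le_div_iff_mul_le hM).mpr h1
    omega
  have hNle : N (n % M) hj ≤ N₀ := by
    have h2 := Finset.le_sup (f := fun j => if hj : j < M then N j hj else 0)
      (Finset.mem_range.mpr hj)
    simp only [dif_pos hj] at h2
    exact h2
  have hfn : f n = f (M * (n / M) + n % M) := by rw [Nat.div_add_mod]
  rw [hfn]
  exact hN _ hj _ (le_trans hNle hm)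

lemma JPbig (r : ℕ) (hr : 1 ≤ r) (S₁ S₂ T₁ T₂ : Finset ℕ)
    (hS : S₁.card + S₂.card = r) (hT : T₁.card + T₂.card = r + 1)
    (f₀ : ℕ → ℝ) (f₁ f₂ g₁ g₂ : ℕ → ℕ → ℝ)
    (hf₀ : ∀ m : ℕ, f₀ m = f₀ 0 + m)
    (hf₁ : ∀ j, ∀ m : ℕ, f₁ j m = f₁ j 0 + (r : ℝ) * m)
    (hf₂ : ∀ j, ∀ m : ℕ, f₂ j m = f₂ j 0 + (r : ℝ) * m)
    (hg₁ : ∀ j, ∀ m : ℕ, g₁ j m = g₁ j 0 + ((r : ℝ) + 1) * m)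
    (hg₂ : ∀ j, ∀ m : ℕ, g₂ j m = g₂ j 0 + ((r : ℝ) + 1) * m) :
    Tendsto (fun m : ℕ =>
        (f₀ m * (∏ j ∈ S₁, f₁ j m) * (∏ j ∈ S₂, f₂ j m)) /
          ((∏ j ∈ T₁, g₁ j m) * (∏ j ∈ T₂, g₂ j m)))
      atTop (nhds ((r : ℝ) ^ r / ((r : ℝ) + 1) ^ (r + 1))) := by
  have hrpos : (0:ℝ) < (r:ℝ) + 1 := by positivity
  refine JPdiv (e := r + 1) (pow_ne_zero _ (ne_of_gt hrpos)) ?_ ?_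
  · -- numerator
    have h0 : Tendsto (fun m : ℕ => (f₀ 0 + 1 * (m:ℝ)) / m) atTop (nhds 1) := JPlin _ 1
    have h1 := JPprod S₁ (fun j => f₁ j 0) (r : ℝ)
    have h2 := JPprod S₂ (fun j => f₂ j 0) (r : ℝ)
    have h := (h0.mul h1).mul h2
    have hval : (1 : ℝ) * (r:ℝ) ^ S₁.card * (r:ℝ) ^ S₂.card = (r:ℝ) ^ r := by
      rw [one_mul, ← pow_add, hS]
    rw [hval] at h
    refine h.congr' ?_
    filter_upwards [eventually_ge_atTop 1] with m hm
    have hm' : (m : ℝ) ≠ 0 := Nat.cast_ne_zero.mpr (by omega)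
    rw [hf₀ m]
    rw [show (∏ j ∈ S₁, f₁ j m) = ∏ j ∈ S₁, (f₁ j 0 + (r:ℝ) * m) from
      Finset.prod_congr rfl fun j _ => hf₁ j m]
    rw [show (∏ j ∈ S₂, f₂ j m) = ∏ j ∈ S₂, (f₂ j 0 + (r:ℝ) * m) from
      Finset.prod_congr rfl fun j _ => hf₂ j m]
    rw [show r + 1 = 1 + S₁.card + S₂.card by omega, pow_add, pow_add, pow_one]
    rw [one_mul]
    field_simp
    try ring
  · have h1 := JPprod T₁ (fun j => g₁ j 0) ((r : ℝ) + 1)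
    have h2 := JPprod T₂ (fun j => g₂ j 0) ((r : ℝ) + 1)
    have h := h1.mul h2
    have hval : ((r:ℝ)+1) ^ T₁.card * ((r:ℝ)+1) ^ T₂.card = ((r:ℝ)+1) ^ (r+1) := by
      rw [← pow_add, hT]
    rw [hval] at h
    refine h.congr' ?_
    filter_upwards [eventually_ge_atTop 1] with m hm
    have hm' : (m : ℝ) ≠ 0 := Nat.cast_ne_zero.mpr (by omega)
    rw [show (∏ j ∈ T₁, g₁ j m) = ∏ j ∈ T₁, (g₁ j 0 + ((r:ℝ)+1) * m) from
      Finset.prod_congr rfl fun j _ => hg₁ j m]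
    rw [show (∏ j ∈ T₂, g₂ j m) = ∏ j ∈ T₂, (g₂ j 0 + ((r:ℝ)+1) * m) from
      Finset.prod_congr rfl fun j _ => hg₂ j m]
    rw [show r + 1 = T₁.card + T₂.card from hT.symm, pow_add]
    field_simp
    try ring

lemma JPpart1 (r : ℕ) (hr : 1 ≤ r) (a : ℕ → ℝ) (b : ℝ) :
    Tendsto (fun n => alphaJP r a b n) atTop
      (nhds ((r : ℂ) ^ r / ((r : ℂ) + 1) ^ (r + 1))) := by
  apply JPclasses ((r + 1) * r) (by positivity)
  intro j hj
  set i := j % (r + 1) with hi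
  set k := j / (r + 1) with hk
  have hik : i < r + 1 := Nat.mod_lt _ (by omega)
  have hkr : k < r := by
    rw [hk]
    exact (Nat.div_lt_iff_lt_mul (by omega)).mpr (by rw [mul_comm r (r+1)]; exact hj)
  have h1 : ∀ m : ℕ, ((r + 1) * r * m + j) % (r + 1) = i := by
    intro m
    rw [show (r + 1) * r * m + j = j + (r + 1) * (r * m) from by ring,
      Nat.add_mul_mod_self_left]
  have h2 : ∀ m : ℕ, ((r + 1) * r * m + j) / (r + 1) = r * m + k := by
    intro m
    rw [show (r + 1) * r * m + j = j + (r + 1) * (r * m) from by ring,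
      Nat.add_mul_div_left _ _ (by omega : 0 < r + 1)]
    omega
  have h3 : ∀ m : ℕ, (r * m + k) % r = k := by
    intro m
    rw [show r * m + k = k + r * m from by ring, Nat.add_mul_mod_self_left,
      Nat.mod_eq_of_lt hkr]
  have h4 : ∀ m : ℕ, (r * m + k) / r = m := by
    intro m
    rw [show r * m + k = k + r * m from by ring,
      Nat.add_mul_div_left _ _ (by omega : 0 < r), Nat.div_eq_of_lt hkr]
    omega
  have hcast : ((((r : ℝ) ^ r / ((r : ℝ) + 1) ^ (r + 1)) : ℝ) : ℂ)
      = (r : ℂ) ^ r / ((r : ℂ) + 1) ^ (r + 1) := by push_cast; rfl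
  simp only [alphaJP, h1, h2, h3, h4]
  by_cases hcase : k + i < r
  · simp only [if_pos hcase]
    have hb := JPbig r hr (Finset.range i) (Finset.Icc (i + 1) r)
      (Finset.Icc 1 (k + i + 1)) (Finset.Icc (k + i + 1) r)
      (by simp [Nat.card_Icc]; omega) (by simp [Nat.card_Icc]; omega)
      (fun m : ℕ => a (k + i + 1) - a i + (m : ℝ))
      (fun j m => a j + b + (r : ℝ) * m + k + 2)
      (fun j m => a j + b + (r : ℝ) * m + k + 1)
      (fun j m => a j + b + ((r : ℝ) + 1) * m + k + 2)
      (fun j m => a j + b + ((r : ℝ) + 1) * m + k + 1)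
      (by intro m; push_cast; ring) (by intro j m; push_cast; ring)
      (by intro j m; push_cast; ring) (by intro j m; push_cast; ring)
      (by intro j m; push_cast; ring)
    have hc := (Complex.continuous_ofReal.tendsto _).comp hb
    rw [hcast] at hc
    exact hc
  · simp only [if_neg hcase]
    have hb := JPbig r hr (Finset.range i) (Finset.Icc (i + 1) r)
      (Finset.Icc 1 (k + i + 1 - r)) (Finset.Icc (k + i + 1 - r) r)
      (by simp [Nat.card_Icc]; omega) (by simp [Nat.card_Icc]; omega)
      (fun m : ℕ => a (k + i - r + 1) - a i + (m : ℝ) + 1)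
      (fun j m => a j + b + (r : ℝ) * m + k + 2)
      (fun j m => a j + b + (r : ℝ) * m + k + 1)
      (fun j m => a j + b + ((r : ℝ) + 1) * m + k + 3)
      (fun j m => a j + b + ((r : ℝ) + 1) * m + k + 2)
      (by intro m; push_cast; ring) (by intro j m; push_cast; ring)
      (by intro j m; push_cast; ring) (by intro j m; push_cast; ring)
      (by intro j m; push_cast; ring)
    have hc := (Complex.continuous_ofReal.tendsto _).comp hb
    rw [hcast] at hc
    exact hc

lemma bidMul_L_zero (r t : ℕ) (α : ℕ → ℂ) (Y : ℕ → ℕ → ℂ) (q : ℕ) :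
    bidMul (Lmat r t α) Y 0 q = Y 0 q := by
  show ∑ c ∈ Finset.range 2, Lmat r t α 0 c * Y c q = Y 0 q
  rw [Finset.sum_range_succ, Finset.sum_range_succ, Finset.sum_range_zero]
  have h0 : Lmat r t α 0 0 = 1 := by simp [Lmat]
  have h1 : Lmat r t α 0 1 = 0 := by
    simp only [Lmat]
    rw [if_neg (by omega), if_neg (by omega)]
  rw [h0, h1]
  ring

lemma bidMul_L_succ (r t : ℕ) (α : ℕ → ℂ) (Y : ℕ → ℕ → ℂ) (p q : ℕ) :
    bidMul (Lmat r t α) Y (p + 1) q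
      = Y (p + 1) q + α ((r + 1) * p + t) * Y p q := by
  show ∑ c ∈ Finset.range (p + 3), Lmat r t α (p + 1) c * Y c q = _
  rw [Finset.sum_range_succ, Finset.sum_range_succ]
  have h1 : Lmat r t α (p + 1) (p + 2) = 0 := by
    simp only [Lmat]
    rw [if_neg (by omega), if_neg (by omega)]
  have h2 : Lmat r t α (p + 1) (p + 1) = 1 := by simp [Lmat]
  have h3 : ∑ c ∈ Finset.range (p + 1), Lmat r t α (p + 1) c * Y c q
      = α ((r + 1) * p + t) * Y p q := by
    rw [Finset.sum_eq_single_of_mem p (Finset.self_mem_range_succ p)]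
    · congr 1
      simp only [Lmat]
      rw [if_neg (by omega)]
      simp
    · intro c hc hcp
      have hcp1 : c < p + 1 := Finset.mem_range.mp hc
      simp only [Lmat]
      rw [if_neg (by omega), if_neg (by omega), zero_mul]
  rw [h1, h2, h3]
  ring

/-- The inductive invariant. -/
def JPInv (L : ℂ) (s : ℕ) (Y : ℕ → ℕ → ℂ) : Prop :=
  (∀ p q, p + 1 < q → Y p q = 0) ∧
  (∀ p q, q + s < p → Y p q = 0) ∧
  (∀ n, Y n (n + 1) = 1) ∧
  (∀ d : ℕ, Tendsto (fun n => Y (n + d) (n + 1)) atTop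
    (nhds ((Nat.choose (s + 1) d : ℂ) * L ^ d)))

lemma listProd_single (Z : ℕ → ℕ → ℂ) (p q : ℕ) :
    listProd [Z] p q = if q < p + 2 then Z p q else 0 := by
  show ∑ c ∈ Finset.range (p + 2), Z p c * (if c = q then (1:ℂ) else 0) = _
  simp only [mul_ite, mul_one, mul_zero]
  rw [Finset.sum_ite_eq' (Finset.range (p + 2)) q (fun c => Z p c)]
  simp [Finset.mem_range]

lemma jp_inv_base (r : ℕ) (α : ℕ → ℂ) (L : ℂ) (hα : Tendsto α atTop (nhds L)) :
    JPInv L 0 (listProd [Umat r α]) := by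
  have hent : ∀ p q, listProd [Umat r α] p q = if q < p + 2 then Umat r α p q else 0 :=
    listProd_single _
  refine ⟨?_, ?_, ?_, ?_⟩
  · intro p q hpq
    rw [hent]
    by_cases h : q < p + 2
    · simp only [Umat]
      rw [if_pos h, if_neg (by omega), if_neg (by omega)]
    · rw [if_neg h]
  · intro p q hpq
    rw [hent]
    by_cases h : q < p + 2
    · simp only [Umat]
      rw [if_pos h, if_neg (by omega), if_neg (by omega)]
    · rw [if_neg h]
  · intro n
    rw [hent]
    simp only [Umat]
    rw [if_pos (by omega), if_neg (by omega)]
    simp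
  · intro d
    match d with
    | 0 =>
      have : ∀ n : ℕ, listProd [Umat r α] (n + 0) (n + 1) = 1 := by
        intro n
        rw [hent]
        simp only [Umat]
        rw [if_pos (by omega), if_neg (by omega)]
        simp
      simp only [this]
      simpa using tendsto_const_nhds
    | 1 =>
      have : ∀ n : ℕ, listProd [Umat r α] (n + 1) (n + 1) = α ((r + 1) * (n + 1)) := by
        intro n
        rw [hent]
        simp only [Umat]
        rw [if_pos (by omega)]
        simp
      simp only [this]
      have hidx : Tendsto (fun n : ℕ => (r + 1) * (n + 1)) atTop atTop := by
        apply tendsto_atTop_atTop.mpr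
        intro B
        refine ⟨B, fun n hn => ?_⟩
        have : n + 1 ≤ (r + 1) * (n + 1) := Nat.le_mul_of_pos_left _ (by omega)
        omega
      have := hα.comp hidx
      simpa [Function.comp_def] using this
    | (e + 2) =>
      have : ∀ n : ℕ, listProd [Umat r α] (n + (e + 2)) (n + 1) = 0 := by
        intro n
        rw [hent]
        by_cases h : n + 1 < n + (e + 2) + 2
        · simp only [Umat]
          rw [if_pos h, if_neg (by omega), if_neg (by omega)]
        · rw [if_neg h]
      simp only [this]
      have hch : (Nat.choose 1 (e + 2) : ℂ) = 0 := by
        rw [Nat.choose_eq_zero_of_lt (by omega)]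
        simp
      rw [hch, zero_mul]
      exact tendsto_const_nhds

lemma jp_inv_step (r t : ℕ) (α : ℕ → ℂ) (L : ℂ) (hα : Tendsto α atTop (nhds L))
    (s : ℕ) (Y : ℕ → ℕ → ℂ) (hY : JPInv L s Y) :
    JPInv L (s + 1) (bidMul (Lmat r t α) Y) := by
  obtain ⟨hup, hlow, hdiag, hlim⟩ := hY
  have hupper : ∀ p q, p + 1 < q → bidMul (Lmat r t α) Y p q = 0 := by
    intro p q hpq
    match p with
    | 0 => rw [bidMul_L_zero]; exact hup 0 q hpq
    | (p + 1) =>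
      rw [bidMul_L_succ, hup _ _ hpq, hup _ _ (by omega), mul_zero, add_zero]
  have hdiag' : ∀ n, bidMul (Lmat r t α) Y n (n + 1) = 1 := by
    intro n
    match n with
    | 0 => rw [bidMul_L_zero]; exact hdiag 0
    | (n + 1) =>
      rw [bidMul_L_succ, hdiag, hup _ _ (by omega), mul_zero, add_zero]
  refine ⟨hupper, ?_, hdiag', ?_⟩
  · intro p q hpq
    match p with
    | 0 => omega
    | (p + 1) =>
      rw [bidMul_L_succ, hlow _ _ (by omega), hlow _ _ (by omega), mul_zero, add_zero]
  · intro d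
    match d with
    | 0 =>
      simp only [Nat.add_zero, hdiag']
      simpa using tendsto_const_nhds
    | (e + 1) =>
      have heq : ∀ n : ℕ, bidMul (Lmat r t α) Y (n + (e + 1)) (n + 1)
          = Y (n + (e + 1)) (n + 1) + α ((r + 1) * (n + e) + t) * Y (n + e) (n + 1) := by
        intro n
        exact bidMul_L_succ r t α Y (n + e) (n + 1)
      simp only [heq]
      have hidx : Tendsto (fun n : ℕ => (r + 1) * (n + e) + t) atTop atTop := by
        apply tendsto_atTop_atTop.mpr
        intro B
        refine ⟨B, fun n hn => ?_⟩
        have : n + e ≤ (r + 1) * (n + e) := Nat.le_mul_of_pos_left _ (by omega)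
        omega
      have h := (hlim (e + 1)).add (((hα.comp hidx)).mul (hlim e))
      have hval : ((Nat.choose (s + 1) (e + 1) : ℂ) * L ^ (e + 1)
          + L * ((Nat.choose (s + 1) e : ℂ) * L ^ e))
          = (Nat.choose (s + 1 + 1) (e + 1) : ℂ) * L ^ (e + 1) := by
        rw [Nat.choose_succ_succ (s + 1) e]
        push_cast
        ring
      rw [← hval]
      exact h

lemma jp_inv_list (r : ℕ) (α : ℕ → ℂ) (L : ℂ) (hα : Tendsto α atTop (nhds L)) :
    ∀ ks : List ℕ, JPInv L ks.length
      (listProd ((ks.map fun k => Lmat r k α) ++ [Umat r α])) := by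
  intro ks
  induction ks with
  | nil => simpa using jp_inv_base r α L hα
  | cons t ks ih =>
    have : ((t :: ks).map fun k => Lmat r k α) ++ [Umat r α]
        = Lmat r t α :: ((ks.map fun k => Lmat r k α) ++ [Umat r α]) := by simp
    rw [this]
    show JPInv L (t :: ks).length (bidMul (Lmat r t α) (listProd _))
    rw [List.length_cons]
    exact jp_inv_step r t α L hα _ _ ih

lemma JPpart2 (r : ℕ) (α : ℕ → ℂ) (L : ℂ) (hα : Tendsto α atTop (nhds L))
    (k : ℕ) (hk : k ≤ r) :
    Tendsto (fun n => Hprod r α (n + k) n) atTop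
      (nhds ((Nat.choose (r + 1) (k + 1) : ℂ) * L ^ (k + 1))) := by
  have hinv : JPInv L r (Hprod r α) := by
    have := jp_inv_list r α L hα (List.range' 1 r)
    rwa [List.length_range'] at this
  obtain ⟨-, -, -, hlim⟩ := hinv
  have h := (hlim (k + 1)).comp (tendsto_sub_atTop_nat 1)
  refine h.congr' ?_
  filter_upwards [eventually_ge_atTop 1] with n hn
  show Hprod r α (n - 1 + (k + 1)) (n - 1 + 1) = Hprod r α (n + k) n
  congr 1 <;> omega

theorem stmt18 (r : ℕ) (hr : 1 ≤ r) (a : ℕ → ℝ) (b : ℝ) (ha0 : a 0 = -1)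
    (haij : ∀ i j, 1 ≤ i → i ≤ r → 1 ≤ j → j ≤ r → i ≠ j → ∀ z : ℤ, a i - a j ≠ z)
    (hneg : ∀ j, 1 ≤ j → j ≤ r →
      (∀ m : ℕ, a j ≠ -(m + 1 : ℕ)) ∧ (∀ m : ℕ, a j + b + 1 ≠ -(m + 1 : ℕ))) :
    -- `α_n → r^r/(r+1)^{r+1}`
    Tendsto (fun n => alphaJP r a b n) atTop
      (nhds ((r : ℂ) ^ r / ((r : ℂ) + 1) ^ (r + 1))) ∧
    -- and consequently `γ_n^{[k]} = H_{n+k,n} → C(r+1,k+1)·(r^r/(r+1)^{r+1})^{k+1}`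
    (∀ k, k ≤ r →
      Tendsto (fun n => Hprod r (alphaJP r a b) (n + k) n) atTop
        (nhds ((Nat.choose (r + 1) (k + 1) : ℂ)
          * ((r : ℂ) ^ r / ((r : ℂ) + 1) ^ (r + 1)) ^ (k + 1)))) := by
  have h1 := JPpart1 r hr a b
  exact ⟨h1, fun k hk => JPpart2 r (alphaJP r a b) _ h1 k hk⟩
end
end

section
/- Fix r ≥ 1 and real parameters a_1,…,a_r with a_i − a_j ∉ ℤ for i ≠ j and no a_j a negative integer, and let (α̂_n)_{n∈ℕ} be the coefficients of the bidiagonal factorisation of the Hessenberg recurrence matrix of the multiple Laguerre polynomials of the first kind, given explicitly by α̂_{(r+1)(rm+k)+i} = a*_{k+i+1} − a*_i + m for m ∈ ℕ, 0 ≤ k ≤ r−1, 0 ≤ i ≤ r, where a*_0 := −1 and a*_{rn+j} := a_j + n for n ∈ ℕ, 1 ≤ j ≤ r. Then α̂_n / n → 1/(r(r+1)) as n → ∞, and consequently, for each 0 ≤ k ≤ r, the entries γ̂_n^{[k]} := (L_1⋯L_rU)_{n+k,n} of the Hessenberg matrix built from (α̂_n) satisfy γ̂_n^{[k]} / n^{k+1}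 → C(r+1, k+1) / r^{k+1} as n → ∞, where C(r+1, k+1) is the binomial coefficient. -/
open Polynomial Finset Filter

noncomputable section

def fR (r : ℕ) (a : ℕ → ℝ) (n : ℕ) : ℝ :=
  aStar r a (n / (r + 1) % r + n % (r + 1) + 1) - aStar r a (n % (r + 1))
    + (n / (r + 1) / r : ℕ)

lemma alphaLag_eq_s19 (r : ℕ) (a : ℕ → ℝ) (n : ℕ) :
    alphaLag r a n = ((fR r a n : ℝ) : ℂ) := rfl

lemma div_limit (g : ℕ → ℝ) (c B : ℝ)
    (h : ∀ᶠ n : ℕ in atTop, |g n - c * n| ≤ B) :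
    Tendsto (fun n : ℕ => g n / n) atTop (nhds c) := by
  have h0 : Tendsto (fun n : ℕ => g n / n - c) atTop (nhds 0) := by
    apply squeeze_zero_norm' (a := fun n : ℕ => B / n)
    · filter_upwards [h, eventually_ge_atTop 1] with n hn hn1
      have hnpos : (0:ℝ) < n := by exact_mod_cast hn1
      have he : g n / n - c = (g n - c * n) / n := by
        field_simp
      rw [Real.norm_eq_abs, he, abs_div, abs_of_pos hnpos]
      gcongr
    · exact tendsto_const_div_atTop_nhds_zero_nat B
  have := h0.add (tendsto_const_nhds (x := c) (f := atTop))
  simpa using this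

lemma aStar_bound (r : ℕ) (a : ℕ → ℝ) (hr : 1 ≤ r) (p : ℕ) (hp : p ≤ 2 * r) :
    |aStar r a p| ≤ 3 + ∑ j ∈ Finset.range (r + 1), |a j| := by
  have hsum : (0:ℝ) ≤ ∑ j ∈ Finset.range (r + 1), |a j| :=
    Finset.sum_nonneg fun j _ => abs_nonneg _
  cases p with
  | zero => simp [aStar]; linarith
  | succ m =>
    have h1 : aStar r a (m + 1) = a (m % r + 1) + ((m / r : ℕ) : ℝ) := by
      simp [aStar]
    have hd : m / r ≤ 1 := by
      have : m / r < 2 := (Nat.div_lt_iff_lt_mul (by omega)).mpr (by omega)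
      omega
    have hdr : ((m / r : ℕ) : ℝ) ≤ 2 := by
      have : ((m / r : ℕ) : ℝ) ≤ 1 := by exact_mod_cast hd
      linarith
    have hmem : m % r + 1 ∈ Finset.range (r + 1) := by
      have := Nat.mod_lt m (show 0 < r by omega)
      simp; omega
    have hle : |a (m % r + 1)| ≤ ∑ j ∈ Finset.range (r + 1), |a j| :=
      Finset.single_le_sum (fun j _ => abs_nonneg (a j)) hmem
    rw [h1]
    calc |a (m % r + 1) + ((m / r : ℕ) : ℝ)|
        ≤ |a (m % r + 1)| + |((m / r : ℕ) : ℝ)| := abs_add_le _ _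
      _ ≤ (∑ j ∈ Finset.range (r + 1), |a j|) + 2 := by
          have : |((m / r : ℕ) : ℝ)| = ((m / r : ℕ) : ℝ) := abs_of_nonneg (by positivity)
          rw [this]; linarith
      _ ≤ 3 + ∑ j ∈ Finset.range (r + 1), |a j| := by linarith

lemma fR_bound (r : ℕ) (a : ℕ → ℝ) (hr : 1 ≤ r) :
    ∃ B : ℝ, ∀ n : ℕ, |fR r a n - (n : ℝ) / (r * (r + 1))| ≤ B := by
  set C := 3 + ∑ j ∈ Finset.range (r + 1), |a j| with hC
  refine ⟨2 * C + 1, fun n => ?_⟩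
  set i := n % (r + 1) with hi
  set s := n / (r + 1) with hs
  set k := s % r with hk
  set m := s / r with hm
  have hilt : i < r + 1 := Nat.mod_lt _ (by omega)
  have hklt : k < r := Nat.mod_lt _ (by omega)
  have h1 : (r + 1) * s + i = n := Nat.div_add_mod n (r + 1)
  have h2 : r * m + k = s := Nat.div_add_mod s r
  have hrpos : (0:ℝ) < r := by exact_mod_cast (show 0 < r by omega)
  have h3 : n = (r + 1) * (r * m + k) + i := by rw [h2]; exact h1.symm
  have hncast : (n : ℝ) = (r + 1) * (r * m + k) + i := by exact_mod_cast h3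
  have hfR : fR r a n = aStar r a (k + i + 1) - aStar r a i + m := rfl
  have hb1 : |aStar r a (k + i + 1)| ≤ C := aStar_bound r a hr _ (by omega)
  have hb2 : |aStar r a i| ≤ C := aStar_bound r a hr _ (by omega)
  have hnum : ((r:ℝ) + 1) * k + i ≤ r * (r + 1) := by
    have hk' : (k:ℝ) ≤ (r:ℝ) - 1 := by
      have : (k:ℝ) + 1 ≤ r := by exact_mod_cast hklt
      linarith
    have hi' : (i:ℝ) ≤ r := by exact_mod_cast (by omega : i ≤ r)
    nlinarith
  have hnum0 : (0:ℝ) ≤ ((r:ℝ) + 1) * k + i := by positivity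
  have hfrac1 : (((r:ℝ) + 1) * k + i) / (r * (r + 1)) ≤ 1 :=
    (div_le_one (by positivity)).mpr hnum
  have hfrac0 : (0:ℝ) ≤ (((r:ℝ) + 1) * k + i) / (r * (r + 1)) := by positivity
  have hkey : fR r a n - (n : ℝ) / (r * (r + 1))
      = aStar r a (k + i + 1) - aStar r a i - (((r:ℝ) + 1) * k + i) / (r * (r + 1)) := by
    rw [hfR, hncast]
    field_simp
    ring
  rw [hkey, abs_le]
  constructor
  · have := neg_abs_le (aStar r a (k + i + 1))
    have := neg_abs_le (aStar r a i)
    have := le_abs_self (aStar r a i)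
    linarith
  · have := le_abs_self (aStar r a (k + i + 1))
    have := neg_abs_le (aStar r a i)
    linarith

lemma part1_real (r : ℕ) (a : ℕ → ℝ) (hr : 1 ≤ r) :
    Tendsto (fun n : ℕ => fR r a n / n) atTop (nhds (1 / ((r:ℝ) * (r + 1)))) := by
  obtain ⟨B, hB⟩ := fR_bound r a hr
  apply div_limit _ _ B
  filter_upwards with n
  have : 1 / ((r:ℝ) * (r + 1)) * n = (n:ℝ) / (r * (r + 1)) := by ring
  rw [this]
  exact hB n

lemma L1_real (r : ℕ) (a : ℕ → ℝ) (hr : 1 ≤ r) (q : ℕ) :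
    Tendsto (fun n : ℕ => fR r a ((r + 1) * (n - 1) + q) / n) atTop (nhds (1 / (r:ℝ))) := by
  obtain ⟨B, hB⟩ := fR_bound r a hr
  apply div_limit _ _ (B + (q + r + 1))
  filter_upwards [eventually_ge_atTop 1] with n hn
  set N := (r + 1) * (n - 1) + q with hN
  have hrpos : (0:ℝ) < r := by exact_mod_cast (show 0 < r by omega)
  have hNcast : (N : ℝ) = ((r:ℝ) + 1) * ((n:ℝ) - 1) + q := by
    have h1 : ((n - 1 : ℕ) : ℝ) = (n:ℝ) - 1 := by
      rw [Nat.cast_sub hn]; simp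
    rw [hN]; push_cast [h1]; ring
  have h2 : (N:ℝ) / (r * (r + 1)) - 1 / r * n = ((q:ℝ) - (r + 1)) / (r * (r + 1)) := by
    rw [hNcast]; field_simp; ring
  have h3 : |((q:ℝ) - (r + 1)) / (r * (r + 1))| ≤ (q:ℝ) + r + 1 := by
    rw [abs_div]
    have hD : |(r:ℝ) * (r + 1)| = (r:ℝ) * (r + 1) := abs_of_pos (by positivity)
    rw [hD]
    have hnum : |(q:ℝ) - (r + 1)| ≤ (q:ℝ) + r + 1 := by
      rw [abs_le]; constructor <;> [nlinarith [Nat.cast_nonneg (α := ℝ) q]; nlinarith [Nat.cast_nonneg (α := ℝ) q]]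
    have hr1 : (1:ℝ) ≤ r := by exact_mod_cast hr
    have hge1 : (1:ℝ) ≤ r * (r + 1) := by nlinarith
    calc |(q:ℝ) - (r + 1)| / (r * (r + 1)) ≤ |(q:ℝ) - (r + 1)| :=
          div_le_self (abs_nonneg _) hge1
      _ ≤ (q:ℝ) + r + 1 := hnum
  calc |fR r a N - 1 / (r:ℝ) * n|
      ≤ |fR r a N - (N:ℝ) / (r * (r + 1))| + |(N:ℝ) / (r * (r + 1)) - 1 / r * n| :=
        abs_sub_le _ _ _
    _ ≤ B + ((q:ℝ) + r + 1) := by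
        rw [h2]
        exact add_le_add (hB N) h3

lemma toC {f : ℕ → ℝ} {c : ℝ} (h : Tendsto (fun n : ℕ => f n / n) atTop (nhds c))
    (g : ℕ → ℂ) (hg : ∀ n, g n = ((f n : ℝ) : ℂ)) :
    Tendsto (fun n : ℕ => g n / n) atTop (nhds ((c : ℝ) : ℂ)) := by
  have h2 := (Complex.continuous_ofReal.tendsto c).comp h
  refine h2.congr fun n => ?_
  simp only [Function.comp, hg]
  push_cast
  ring

lemma part1C (r : ℕ) (a : ℕ → ℝ) (hr : 1 ≤ r) :
    Tendsto (fun n : ℕ => alphaLag r a n / (n : ℂ)) atTop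
      (nhds (1 / ((r : ℂ) * ((r : ℂ) + 1)))) := by
  have h := toC (part1_real r a hr) (fun n => alphaLag r a n) (fun n => alphaLag_eq_s19 r a n)
  convert h using 2
  push_cast
  ring

lemma L1C (r : ℕ) (a : ℕ → ℝ) (hr : 1 ≤ r) (q : ℕ) :
    Tendsto (fun n : ℕ => alphaLag r a ((r + 1) * (n - 1) + q) / (n : ℂ)) atTop
      (nhds (1 / (r : ℂ))) := by
  have h := toC (L1_real r a hr q) (fun n => alphaLag r a ((r + 1) * (n - 1) + q))
    (fun n => alphaLag_eq_s19 r a _)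
  convert h using 2
  push_cast
  ring


def Pl (r : ℕ) (α : ℕ → ℂ) (js : List ℕ) : ℕ → ℕ → ℂ :=
  listProd ((js.map fun j => Lmat r j α) ++ [Umat r α])

lemma Pl_nil (r : ℕ) (α : ℕ → ℂ) (n ℓ : ℕ) : Pl r α [] n ℓ = Umat r α n ℓ := by
  simp only [Pl, List.map_nil, List.nil_append, listProd, bidMul]
  by_cases hℓ : ℓ < n + 2
  · rw [Finset.sum_eq_single ℓ]
    · simp
    · intro b _ hb; simp [hb]
    · intro h; exact absurd (Finset.mem_range.mpr hℓ) h
  · have h0 : Umat r α n ℓ = 0 := by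
      simp [Umat, show ℓ ≠ n by omega, show ℓ ≠ n + 1 by omega]
    rw [h0]
    apply Finset.sum_eq_zero
    intro x hx
    have := Finset.mem_range.mp hx
    simp [show x ≠ ℓ by omega]

lemma bidMul_Lmat (r j : ℕ) (α : ℕ → ℂ) (Y : ℕ → ℕ → ℂ) (n ℓ : ℕ) :
    bidMul (Lmat r j α) Y (n + 1) ℓ = Y (n + 1) ℓ + α ((r + 1) * n + j) * Y n ℓ := by
  unfold bidMul
  have hsub : ({n, n + 1} : Finset ℕ) ⊆ Finset.range (n + 1 + 2) := by
    intro x hx; simp at hx ⊢; omega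
  have hz : ∀ x ∈ Finset.range (n + 1 + 2), x ∉ ({n, n + 1} : Finset ℕ) →
      Lmat r j α (n + 1) x * Y x ℓ = 0 := by
    intro x hx hnx
    simp at hnx
    simp [Lmat, show x ≠ n + 1 by omega, show n + 1 ≠ x + 1 by omega, show n ≠ x by omega]
  rw [← Finset.sum_subset hsub hz, Finset.sum_pair (by omega : n ≠ n + 1)]
  simp [Lmat]
  ring

lemma Pl_cons (r j : ℕ) (α : ℕ → ℂ) (js : List ℕ) (n ℓ : ℕ) :
    Pl r α (j :: js) (n + 1) ℓ
      = Pl r α js (n + 1) ℓ + α ((r + 1) * n + j) * Pl r α js n ℓ := by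
  have h : Pl r α (j :: js) = bidMul (Lmat r j α) (Pl r α js) := rfl
  rw [h, bidMul_Lmat]

lemma Pl_cons_zero (r j : ℕ) (α : ℕ → ℂ) (js : List ℕ) (ℓ : ℕ) :
    Pl r α (j :: js) 0 ℓ = Pl r α js 0 ℓ := by
  have h : Pl r α (j :: js) = bidMul (Lmat r j α) (Pl r α js) := rfl
  rw [h]
  unfold bidMul
  rw [show (0:ℕ) + 2 = 2 from rfl, Finset.sum_range_succ, Finset.sum_range_succ,
    Finset.sum_range_zero]
  simp [Lmat]

lemma F1 (r : ℕ) (α : ℕ → ℂ) : ∀ (js : List ℕ) (n ℓ : ℕ), n + 1 < ℓ → Pl r α js n ℓ = 0 := by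
  intro js
  induction js with
  | nil =>
    intro n ℓ h
    rw [Pl_nil]
    simp [Umat, show ℓ ≠ n by omega, show ℓ ≠ n + 1 by omega]
  | cons j js ih =>
    intro n ℓ h
    cases n with
    | zero => rw [Pl_cons_zero]; exact ih 0 ℓ h
    | succ m =>
      rw [Pl_cons, ih (m + 1) ℓ h, ih m ℓ (by omega)]
      ring

lemma F2 (r : ℕ) (α : ℕ → ℂ) : ∀ (js : List ℕ) (n : ℕ), Pl r α js n (n + 1) = 1 := by
  intro js
  induction js with
  | nil =>
    intro n
    rw [Pl_nil]
    simp [Umat, show n + 1 ≠ n by omega]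
  | cons j js ih =>
    intro n
    cases n with
    | zero => rw [Pl_cons_zero]; exact ih 0
    | succ m =>
      rw [Pl_cons, ih (m + 1), F1 r α js m (m + 2) (by omega)]
      ring

lemma F3 (r : ℕ) (α : ℕ → ℂ) :
    ∀ (js : List ℕ) (d n : ℕ), js.length < d → Pl r α js (n + d) n = 0 := by
  intro js
  induction js with
  | nil =>
    intro d n h
    rw [Pl_nil]
    simp at h
    simp [Umat, show n ≠ n + d by omega, show n ≠ n + d + 1 by omega, show d ≠ 0 by omega]
  | cons j js ih =>
    intro d n h
    simp at h
    obtain ⟨e, rfl⟩ : ∃ e, d = e + 1 := ⟨d - 1, by omega⟩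
    rw [show n + (e + 1) = (n + e) + 1 from rfl, Pl_cons]
    rw [show (n + e) + 1 = n + (e + 1) from rfl, ih (e + 1) n (by omega), ih e n (by omega)]
    ring


lemma F4 (r : ℕ) (a : ℕ → ℝ) (hr : 1 ≤ r) :
    ∀ (js : List ℕ) (d : ℕ), d ≤ js.length →
      Tendsto (fun n : ℕ => Pl r (alphaLag r a) js (n + d) n / (n : ℂ) ^ (d + 1)) atTop
        (nhds ((Nat.choose (js.length + 1) (d + 1) : ℂ) / (r : ℂ) ^ (d + 1))) := by
  intro js
  induction js with
  | nil =>
    intro d hd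
    obtain rfl : d = 0 := Nat.le_zero.mp hd
    have h := L1C r a hr (r + 1)
    have h2 : Tendsto (fun n : ℕ => alphaLag r a ((r + 1) * n) / (n : ℂ)) atTop
        (nhds (1 / (r : ℂ))) := by
      refine h.congr' ?_
      filter_upwards [eventually_ge_atTop 1] with n hn
      have : (r + 1) * (n - 1) + (r + 1) = (r + 1) * n := by
        have h1 : n - 1 + 1 = n := by omega
        calc (r + 1) * (n - 1) + (r + 1) = (r + 1) * ((n - 1) + 1) := by ring
          _ = (r + 1) * n := by rw [h1]
      rw [this]
    have h3 : (fun n : ℕ => Pl r (alphaLag r a) [] (n + 0) n / (n : ℂ) ^ (0 + 1))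
        = fun n : ℕ => alphaLag r a ((r + 1) * n) / (n : ℂ) := by
      funext n
      simp [Pl_nil, Umat, pow_one]
    rw [h3]
    simpa using h2
  | cons j js ih =>
    intro d hd
    simp only [List.length_cons] at hd
    have T1 : Tendsto (fun n : ℕ => Pl r (alphaLag r a) js (n + d) n / (n : ℂ) ^ (d + 1)) atTop
        (nhds ((Nat.choose (js.length + 1) (d + 1) : ℂ) / (r : ℂ) ^ (d + 1))) := by
      rcases Nat.lt_or_ge js.length d with hlt | hge
      · have hz : ∀ n : ℕ, Pl r (alphaLag r a) js (n + d) n = 0 :=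
          fun n => F3 r (alphaLag r a) js d n hlt
        have hc : Nat.choose (js.length + 1) (d + 1) = 0 :=
          Nat.choose_eq_zero_of_lt (by omega)
        simp only [hz, hc, Nat.cast_zero, zero_div]
        exact tendsto_const_nhds
      · exact ih d hge
    cases d with
    | zero =>
      have T2 := L1C r a hr j
      have key : ∀ᶠ n : ℕ in atTop,
          Pl r (alphaLag r a) js (n + 0) n / (n : ℂ) ^ (0 + 1)
            + alphaLag r a ((r + 1) * (n - 1) + j) / (n : ℂ)
          = Pl r (alphaLag r a) (j :: js) (n + 0) n / (n : ℂ) ^ (0 + 1) := by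
        filter_upwards [eventually_ge_atTop 1] with n hn
        obtain ⟨m, rfl⟩ : ∃ m, n = m + 1 := ⟨n - 1, by omega⟩
        rw [show m + 1 + 0 = m + 1 from rfl, Pl_cons, F2 r (alphaLag r a) js m]
        simp only [zero_add, pow_one, Nat.add_sub_cancel]
        rw [mul_one, add_div]
      have hval : ((Nat.choose ((j :: js).length + 1) (0 + 1) : ℂ)) / (r : ℂ) ^ (0 + 1)
          = (Nat.choose (js.length + 1) (0 + 1) : ℂ) / (r : ℂ) ^ (0 + 1) + 1 / (r : ℂ) := by
        simp only [zero_add, List.length_cons, Nat.choose_one_right, pow_one]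
        push_cast
        ring
      rw [hval]
      exact Tendsto.congr' key (T1.add T2)
    | succ e =>
      have he : e ≤ js.length := by omega
      have T2 := L1C r a hr ((r + 1) * (e + 1) + j)
      have T3 := ih e he
      have key : ∀ᶠ n : ℕ in atTop,
          Pl r (alphaLag r a) js (n + (e + 1)) n / (n : ℂ) ^ (e + 1 + 1)
            + (alphaLag r a ((r + 1) * (n - 1) + ((r + 1) * (e + 1) + j)) / (n : ℂ))
              * (Pl r (alphaLag r a) js (n + e) n / (n : ℂ) ^ (e + 1))
          = Pl r (alphaLag r a) (j :: js) (n + (e + 1)) n / (n : ℂ) ^ (e + 1 + 1) := by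
        filter_upwards [eventually_ge_atTop 1] with n hn
        obtain ⟨m, rfl⟩ : ∃ m, n = m + 1 := ⟨n - 1, by omega⟩
        rw [show m + 1 + (e + 1) = (m + (e + 1)) + 1 by omega, Pl_cons]
        have hidx : (r + 1) * (m + 1 - 1) + ((r + 1) * (e + 1) + j)
            = (r + 1) * (m + (e + 1)) + j := by
          simp only [Nat.add_sub_cancel]
          ring
        rw [hidx, show m + (e + 1) + 1 = m + 1 + (e + 1) by omega,
          show m + (e + 1) = m + 1 + e by omega]
        rw [add_div, div_mul_div_comm, ← pow_succ']
      rw [show (j :: js).length = js.length + 1 from rfl]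
      have hval : ((Nat.choose (js.length + 1 + 1) (e + 1 + 1) : ℂ)) / (r : ℂ) ^ (e + 1 + 1)
          = (Nat.choose (js.length + 1) (e + 1 + 1) : ℂ) / (r : ℂ) ^ (e + 1 + 1)
            + 1 / (r : ℂ) * ((Nat.choose (js.length + 1) (e + 1) : ℂ) / (r : ℂ) ^ (e + 1)) := by
        rw [div_mul_div_comm, one_mul, ← pow_succ', Nat.choose_succ_succ (js.length + 1) (e + 1)]
        push_cast
        rw [← add_div]
        ring
      rw [hval]
      exact Tendsto.congr' key (T1.add (T2.mul T3))

theorem stmt19 (r : ℕ) (hr : 1 ≤ r) (a : ℕ → ℝ)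
    (haij : ∀ i j, 1 ≤ i → i ≤ r → 1 ≤ j → j ≤ r → i ≠ j → ∀ z : ℤ, a i - a j ≠ z)
    (hneg : ∀ j, 1 ≤ j → j ≤ r → ∀ m : ℕ, a j ≠ -(m + 1 : ℕ)) :
    -- `α̂_n / n → 1/(r(r+1))`
    Tendsto (fun n : ℕ => alphaLag r a n / (n : ℂ)) atTop
      (nhds (1 / ((r : ℂ) * ((r : ℂ) + 1)))) ∧
    -- and consequently `γ̂_n^{[k]} / n^{k+1} → C(r+1,k+1)/r^{k+1}`
    (∀ k, k ≤ r →
      Tendsto (fun n : ℕ => Hprod r (alphaLag r a) (n + k) n / (n : ℂ) ^ (k + 1)) atTop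
        (nhds ((Nat.choose (r + 1) (k + 1) : ℂ) / (r : ℂ) ^ (k + 1)))) := by
  constructor
  · exact part1C r a hr
  · intro k hk
    have h := F4 r a hr (List.range' 1 r) k (by simpa [List.length_range'] using hk)
    simp only [List.length_range'] at h
    exact h
end
end
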